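/- arXiv:2511.03028 — 8 statements merged into one kernel-verified Lean document; each statement's English description precedes it below -/
import Mathlib

section
/- Let M be an m×r integer matrix, let P be an m×m signed permutation matrix, and let U be an r×r unimodular integer matrix. Then the graph (PMU)^SACG is isomorphic to the graph M^SACG. -/
/-- The subgroup of `ℤ^m` generated by the columns of `M`. -/
def colSpan (m r : ℕ) (M : Matrix (Fin m) (Fin r) ℤ) : AddSubgroup (Fin m → ℤ) :=
  AddSubgroup.closure (Set.range fun j : Fin r => fun i : Fin m => M i j)

/-- The standardized Abelian Cayley graph associated to `M`. -/
def SACG (m r : ℕ) (M : Matrix (Fin m) (Fin r) ℤ) :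
    SimpleGraph ((Fin m → ℤ) ⧸ colSpan m r M) where
  Adj x y := x ≠ y ∧ ∃ i : Fin m,
    x - y = QuotientAddGroup.mk (Pi.single i (1 : ℤ)) ∨
    y - x = QuotientAddGroup.mk (Pi.single i (1 : ℤ))
  symm := by
    constructor
    rintro x y ⟨hne, i, h⟩
    exact ⟨hne.symm, i, h.symm⟩
  loopless := by constructor; rintro x ⟨h, -⟩; exact h rfl

/-- A square integer matrix is unimodular if its determinant is `±1`. -/
def IsUnimodular {k : ℕ} (U : Matrix (Fin k) (Fin k) ℤ) : Prop :=
  U.det = 1 ∨ U.det = -1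

/-- A signed permutation matrix: exactly one nonzero entry in each row and in each
column, each such entry being `±1`. -/
def IsSignedPerm {k : ℕ} (P : Matrix (Fin k) (Fin k) ℤ) : Prop :=
  (∀ i, ∃! j, P i j ≠ 0) ∧ (∀ j, ∃! i, P i j ≠ 0) ∧
    ∀ i j, P i j = 0 ∨ P i j = 1 ∨ P i j = -1

lemma colSpan_eq_range (m r : ℕ) (M : Matrix (Fin m) (Fin r) ℤ) :
    colSpan m r M = (LinearMap.range M.mulVecLin).toAddSubgroup := by
  rw [colSpan, Matrix.range_mulVecLin, Submodule.span_int_eq_addSubgroupClosure]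
  rfl

lemma colSpan_mul_right (m r : ℕ) (M : Matrix (Fin m) (Fin r) ℤ)
    (U : Matrix (Fin r) (Fin r) ℤ) (hU : IsUnimodular U) :
    colSpan m r (M * U) = colSpan m r M := by
  have hdet : IsUnit U.det := by
    rcases hU with h | h <;> rw [h] <;> exact Int.isUnit_iff.mpr (by simp)
  rw [colSpan_eq_range, colSpan_eq_range]
  congr 1
  rw [Matrix.mulVecLin_mul]
  have hsurj : Function.Surjective U.mulVecLin := by
    intro v
    refine ⟨U⁻¹.mulVec v, ?_⟩
    simp [Matrix.mulVecLin_apply, Matrix.mulVec_mulVec, Matrix.mul_nonsing_inv U hdet,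
      Matrix.one_mulVec]
  exact LinearMap.range_comp_of_range_eq_top _ (LinearMap.range_eq_top.2 hsurj)

open Matrix in
theorem stmt_1 (m r : ℕ) (M : Matrix (Fin m) (Fin r) ℤ)
    (P : Matrix (Fin m) (Fin m) ℤ) (U : Matrix (Fin r) (Fin r) ℤ)
    (hP : IsSignedPerm P) (hU : IsUnimodular U) :
    Nonempty ((SACG m r (P * M * U)) ≃g (SACG m r M)) := by
  obtain ⟨hrow, hcol, hval⟩ := hP
  -- P * Pᵀ = 1
  have hPPT : P * Pᵀ = 1 := by
    ext i k
    rw [Matrix.mul_apply]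
    by_cases h : i = k
    · subst h
      obtain ⟨j₀, hj₀, huniq⟩ := hrow i
      rw [Finset.sum_eq_single j₀]
      · simp only [Matrix.transpose_apply, Matrix.one_apply_eq]
        rcases hval i j₀ with h | h | h
        · exact absurd h hj₀
        · rw [h]; ring
        · rw [h]; ring
      · intro j _ hne
        rcases eq_or_ne (P i j) 0 with h0 | h0
        · simp [h0]
        · exact absurd (huniq j h0) hne
      · intro h; exact absurd (Finset.mem_univ j₀) h
    · rw [Matrix.one_apply_ne h]
      apply Finset.sum_eq_zero
      intro j _
      rcases eq_or_ne (P i j) 0 with h0 | h0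
      · simp [h0]
      · rcases eq_or_ne (P k j) 0 with h1 | h1
        · simp [Matrix.transpose_apply, h1]
        · obtain ⟨i₀, -, hu⟩ := hcol j
          exact absurd ((hu i h0).trans (hu k h1).symm) h
  have hTP : Pᵀ * P = 1 := mul_eq_one_comm.mp hPPT
  -- the additive equivalence induced by Pᵀ
  let e : (Fin m → ℤ) ≃+ (Fin m → ℤ) :=
    { toFun := Pᵀ.mulVec
      invFun := P.mulVec
      left_inv := fun v => by rw [Matrix.mulVec_mulVec, hPPT, Matrix.one_mulVec]
      right_inv := fun v => by rw [Matrix.mulVec_mulVec, hTP, Matrix.one_mulVec]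
      map_add' := fun x y => Matrix.mulVec_add _ x y }
  have hmap : (colSpan m r (P * M * U)).map e.toAddMonoidHom = colSpan m r M := by
    rw [← colSpan_mul_right m r M U hU, colSpan_eq_range, colSpan_eq_range]
    ext z
    simp only [AddSubgroup.mem_map, Submodule.mem_toAddSubgroup, LinearMap.mem_range,
      Matrix.mulVecLin_apply]
    constructor
    · rintro ⟨y, ⟨v, rfl⟩, rfl⟩
      refine ⟨v, ?_⟩
      symm
      show Pᵀ.mulVec ((P * M * U).mulVec v) = (M * U).mulVec v
      rw [Matrix.mulVec_mulVec, ← Matrix.mul_assoc, ← Matrix.mul_assoc, hTP, Matrix.one_mul]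
    · rintro ⟨v, rfl⟩
      refine ⟨(P * M * U).mulVec v, ⟨v, rfl⟩, ?_⟩
      show Pᵀ.mulVec ((P * M * U).mulVec v) = (M * U).mulVec v
      rw [Matrix.mulVec_mulVec, ← Matrix.mul_assoc, ← Matrix.mul_assoc, hTP, Matrix.one_mul]
  let ψ : ((Fin m → ℤ) ⧸ colSpan m r (P * M * U)) ≃+ ((Fin m → ℤ) ⧸ colSpan m r M) :=
    QuotientAddGroup.congr _ _ e hmap
  have hψmk : ∀ z : Fin m → ℤ,
      ψ (QuotientAddGroup.mk z) = QuotientAddGroup.mk (e z) := fun z => rfl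
  have hψsymm : ∀ z : Fin m → ℤ,
      ψ.symm (QuotientAddGroup.mk z) = QuotientAddGroup.mk (e.symm z) := by
    intro z
    apply ψ.injective
    rw [AddEquiv.apply_symm_apply, hψmk, AddEquiv.apply_symm_apply]
  -- key computations on basis vectors
  have key1 : ∀ i : Fin m, ∃ j : Fin m,
      e (Pi.single i 1) = Pi.single j 1 ∨ e (Pi.single i 1) = -Pi.single j 1 := by
    intro i
    obtain ⟨j, hj, huniq⟩ := hrow i
    have he : e (Pi.single i 1) = P i := by
      show Pᵀ.mulVec (Pi.single i 1) = P i
      rw [Matrix.mulVec_single_one]; rfl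
    have hz : ∀ k, k ≠ j → P i k = 0 := by
      intro k hk
      by_contra h0
      exact hk (huniq k h0)
    rcases hval i j with h | h | h
    · exact absurd h hj
    · refine ⟨j, Or.inl ?_⟩
      rw [he]; funext k
      rcases eq_or_ne k j with rfl | hk
      · simp [h]
      · simp [Pi.single_apply, hk, hz k hk]
    · refine ⟨j, Or.inr ?_⟩
      rw [he]; funext k
      rcases eq_or_ne k j with rfl | hk
      · simp [h]
      · simp [Pi.single_apply, hk, hz k hk]
  have key2 : ∀ j : Fin m, ∃ i : Fin m,
      e.symm (Pi.single j 1) = Pi.single i 1 ∨ e.symm (Pi.single j 1) = -Pi.single i 1 := by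
    intro j
    obtain ⟨i, hi, huniq⟩ := hcol j
    have he : e.symm (Pi.single j 1) = Pᵀ j := by
      show P.mulVec (Pi.single j 1) = Pᵀ j
      rw [Matrix.mulVec_single_one]; rfl
    have hz : ∀ k, k ≠ i → P k j = 0 := by
      intro k hk
      by_contra h0
      exact hk (huniq k h0)
    rcases hval i j with h | h | h
    · exact absurd h hi
    · refine ⟨i, Or.inl ?_⟩
      rw [he]; funext k
      rcases eq_or_ne k i with rfl | hk
      · simp [Matrix.transpose_apply, h]
      · simp [Matrix.transpose_apply, Pi.single_apply, hk, hz k hk]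
    · refine ⟨i, Or.inr ?_⟩
      rw [he]; funext k
      rcases eq_or_ne k i with rfl | hk
      · simp [Matrix.transpose_apply, h]
      · simp [Matrix.transpose_apply, Pi.single_apply, hk, hz k hk]
  -- transfer of the adjacency condition
  have fwd : ∀ d : (Fin m → ℤ) ⧸ colSpan m r (P * M * U),
      (∃ i, d = QuotientAddGroup.mk (Pi.single i (1 : ℤ)) ∨
            -d = QuotientAddGroup.mk (Pi.single i (1 : ℤ))) →
      ∃ j, ψ d = QuotientAddGroup.mk (Pi.single j (1 : ℤ)) ∨
           -(ψ d) = QuotientAddGroup.mk (Pi.single j (1 : ℤ)) := by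
    rintro d ⟨i, hd | hd⟩
    · obtain ⟨j, hj | hj⟩ := key1 i
      · exact ⟨j, Or.inl (by rw [hd, hψmk, hj])⟩
      · refine ⟨j, Or.inr ?_⟩
        rw [hd, hψmk, hj]
        rw [← QuotientAddGroup.mk_neg, neg_neg]
    · obtain ⟨j, hj | hj⟩ := key1 i
      · refine ⟨j, Or.inr ?_⟩
        rw [← map_neg ψ d, hd, hψmk, hj]
      · refine ⟨j, Or.inl ?_⟩
        have : ψ (-d) = QuotientAddGroup.mk (-Pi.single j (1 : ℤ)) := by
          rw [hd, hψmk, hj]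
        rw [map_neg ψ d, QuotientAddGroup.mk_neg] at this
        exact neg_injective this
  have bwd : ∀ d : (Fin m → ℤ) ⧸ colSpan m r (P * M * U),
      (∃ j, ψ d = QuotientAddGroup.mk (Pi.single j (1 : ℤ)) ∨
            -(ψ d) = QuotientAddGroup.mk (Pi.single j (1 : ℤ))) →
      ∃ i, d = QuotientAddGroup.mk (Pi.single i (1 : ℤ)) ∨
           -d = QuotientAddGroup.mk (Pi.single i (1 : ℤ)) := by
    rintro d ⟨j, hd | hd⟩
    · obtain ⟨i, hi | hi⟩ := key2 j
      · refine ⟨i, Or.inl ?_⟩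
        have := congrArg ψ.symm hd
        rw [AddEquiv.symm_apply_apply, hψsymm, hi] at this
        exact this
      · refine ⟨i, Or.inr ?_⟩
        have := congrArg ψ.symm hd
        rw [AddEquiv.symm_apply_apply, hψsymm, hi] at this
        rw [this, QuotientAddGroup.mk_neg, neg_neg]
    · obtain ⟨i, hi | hi⟩ := key2 j
      · refine ⟨i, Or.inr ?_⟩
        have := congrArg ψ.symm hd
        rw [map_neg ψ.symm, AddEquiv.symm_apply_apply, hψsymm, hi] at this
        exact this
      · refine ⟨i, Or.inl ?_⟩
        have := congrArg ψ.symm hd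
        rw [map_neg ψ.symm, AddEquiv.symm_apply_apply, hψsymm, hi,
          QuotientAddGroup.mk_neg] at this
        exact neg_injective this
  refine ⟨⟨ψ.toEquiv, ?_⟩⟩
  intro x y
  show (SACG m r M).Adj (ψ x) (ψ y) ↔ (SACG m r (P * M * U)).Adj x y
  constructor
  · rintro ⟨hne, i, h⟩
    refine ⟨fun h' => hne (by rw [h']), ?_⟩
    have : ∃ i, (x - y) = QuotientAddGroup.mk (Pi.single i (1:ℤ)) ∨
        -(x - y) = QuotientAddGroup.mk (Pi.single i (1:ℤ)) := by
      apply bwd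
      refine ⟨i, ?_⟩
      rcases h with h | h
      · exact Or.inl (by rw [map_sub]; exact h)
      · exact Or.inr (by rw [map_sub, neg_sub]; exact h)
    obtain ⟨i', h'⟩ := this
    exact ⟨i', by rwa [neg_sub] at h'⟩
  · rintro ⟨hne, i, h⟩
    refine ⟨fun h' => hne (ψ.injective h'), ?_⟩
    have : ∃ j, ψ (x - y) = QuotientAddGroup.mk (Pi.single j (1:ℤ)) ∨
        -(ψ (x - y)) = QuotientAddGroup.mk (Pi.single j (1:ℤ)) := by
      apply fwd
      refine ⟨i, ?_⟩
      rcases h with h | h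
      · exact Or.inl h
      · exact Or.inr (by rw [neg_sub]; exact h)
    obtain ⟨j, h'⟩ := this
    rw [map_sub] at h'
    exact ⟨j, by rwa [neg_sub] at h'⟩
end

section
/- Let m ≥ 2 and let M be an m×r integer matrix. Let M' be the (m−1)×r integer matrix whose first row is the sum of the first two rows of M and whose remaining rows are rows 3 through m of M. If no standard basis vector of ℤ^(m−1) lies in the subgroup generated by the columns of M', then the linear map ℤ^m → ℤ^(m−1) sending (x_1, x_2, x_3, …, x_m) to (x_1 + x_2, x_3, …, x_m) induces a graph homomorphism from M^SACG to M'^SACG; in particular, χ(M^SACG) ≤ χ(M'^SACG). -/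
/-- The additive map `(x_1, x_2, x_3, …) ↦ (x_1 + x_2, x_3, …)`. -/
def addDown (m : ℕ) : (Fin (m + 2) → ℤ) →+ (Fin (m + 1) → ℤ) where
  toFun x := Fin.cons (x 0 + x 1) (fun i : Fin m => x i.succ.succ)
  map_zero' := by
    funext k
    refine Fin.cases ?_ ?_ k <;> simp
  map_add' x y := by
    funext k
    refine Fin.cases ?_ ?_ k <;> simp [add_add_add_comm]

lemma addDown_single (m : ℕ) (i : Fin (m + 2)) :
    ∃ i' : Fin (m + 1),
      addDown m (Pi.single i (1 : ℤ)) = Pi.single i' (1 : ℤ) := by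
  refine Fin.cases ?_ (fun j => ?_) i
  · refine ⟨0, ?_⟩
    funext k
    refine Fin.cases ?_ ?_ k <;>
      simp [addDown, Pi.single_apply, Fin.succ_ne_zero, (Fin.succ_ne_zero _).symm]
  · refine Fin.cases ?_ (fun l => ?_) j
    · refine ⟨0, ?_⟩
      funext k
      refine Fin.cases ?_ ?_ k <;>
        simp [addDown, Pi.single_apply, Fin.succ_ne_zero, (Fin.succ_ne_zero _).symm,
          Fin.succ_injective, Fin.succ_succ_ne_one, (Fin.succ_succ_ne_one _).symm]
    · refine ⟨l.succ, ?_⟩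
      funext k
      refine Fin.cases ?_ ?_ k <;>
        simp [addDown, Pi.single_apply, Fin.succ_ne_zero, (Fin.succ_ne_zero _).symm,
          (Fin.succ_injective _).eq_iff, Fin.succ_succ_ne_one, (Fin.succ_succ_ne_one _).symm]

theorem stmt_3 (m r : ℕ) (M : Matrix (Fin (m + 2)) (Fin r) ℤ)
    (M' : Matrix (Fin (m + 1)) (Fin r) ℤ)
    (hM' : ∀ j : Fin r,
      (fun i => M' i j) = Fin.cons (M 0 j + M 1 j) (fun i : Fin m => M i.succ.succ j))
    (hloops : ∀ i : Fin (m + 1),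
      (Pi.single i (1 : ℤ) : Fin (m + 1) → ℤ) ∉ colSpan (m + 1) r M') :
    (∃ f : (SACG (m + 2) r M) →g (SACG (m + 1) r M'),
        ∀ x : Fin (m + 2) → ℤ,
          f (QuotientAddGroup.mk x) =
            QuotientAddGroup.mk (Fin.cons (x 0 + x 1) (fun i : Fin m => x i.succ.succ))) ∧
      (SACG (m + 2) r M).chromaticNumber ≤ (SACG (m + 1) r M').chromaticNumber := by
  have hcol : colSpan (m + 2) r M ≤ (colSpan (m + 1) r M').comap (addDown m) := by
    rw [colSpan, AddSubgroup.closure_le]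
    rintro _ ⟨j, rfl⟩
    show addDown m _ ∈ colSpan (m + 1) r M'
    have : addDown m (fun i : Fin (m + 2) => M i j) = fun i => M' i j := by
      rw [hM' j]; rfl
    rw [this]
    exact AddSubgroup.subset_closure ⟨j, rfl⟩
  let F : (Fin (m + 2) → ℤ) ⧸ colSpan (m + 2) r M →+
      (Fin (m + 1) → ℤ) ⧸ colSpan (m + 1) r M' :=
    QuotientAddGroup.map _ _ (addDown m) hcol
  have hFmk : ∀ x : Fin (m + 2) → ℤ,
      F (QuotientAddGroup.mk x) = QuotientAddGroup.mk (addDown m x) := fun x => rfl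
  have hadj : ∀ x y, (SACG (m + 2) r M).Adj x y → (SACG (m + 1) r M').Adj (F x) (F y) := by
    rintro x y ⟨hne, i, h⟩
    obtain ⟨i', hi'⟩ := addDown_single m i
    have hkey : F x - F y = QuotientAddGroup.mk (Pi.single i' (1 : ℤ)) ∨
        F y - F x = QuotientAddGroup.mk (Pi.single i' (1 : ℤ)) := by
      rcases h with h | h
      · left
        rw [← map_sub, h, hFmk, hi']
      · right
        rw [← map_sub, h, hFmk, hi']
    have hFne : F x ≠ F y := by
      intro he
      rcases hkey with h' | h' <;>
      · rw [he, sub_self] at h'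
        exact hloops i' ((QuotientAddGroup.eq_zero_iff _).mp h'.symm)
    exact ⟨hFne, i', hkey⟩
  refine ⟨⟨⟨F, hadj _ _⟩, fun x => rfl⟩, ?_⟩
  exact SimpleGraph.chromaticNumber_le_of_forall_imp
    (fun n hc => ⟨hc.some.comp ⟨F, hadj _ _⟩⟩)
end

section
/- Let m ≥ 2, let M be an m×r integer matrix whose last row is a zero row, and let M' be the (m−1)×r matrix obtained from M by deleting that zero row. Suppose no standard basis vector of ℤ^(m−1) lies in the subgroup generated by the columns of M'. Then χ(M^SACG) = χ(M'^SACG). -/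
namespace StmtAux

variable {m : ℕ}

/-- projection forgetting the last coordinate -/
def piHom (m : ℕ) : (Fin (m + 1) → ℤ) →+ (Fin m → ℤ) where
  toFun v := v ∘ Fin.castSucc
  map_zero' := rfl
  map_add' _ _ := rfl

/-- evaluation at the last coordinate -/
def tauHom (m : ℕ) : (Fin (m + 1) → ℤ) →+ ℤ := Pi.evalAddMonoidHom _ (Fin.last m)

/-- extension by zero -/
def iotaHom (m : ℕ) : (Fin m → ℤ) →+ (Fin (m + 1) → ℤ) where
  toFun v := Fin.snoc v 0
  map_zero' := by
    funext i
    induction i using Fin.lastCases <;> simp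
  map_add' u v := by
    funext i
    induction i using Fin.lastCases <;> simp

lemma piHom_single (i : Fin m) :
    piHom m (Pi.single i.castSucc (1 : ℤ)) = Pi.single i 1 := by
  funext k
  simp [piHom, Pi.single_apply, Fin.castSucc_inj]

lemma piHom_single_last :
    piHom m (Pi.single (Fin.last m) (1 : ℤ)) = 0 := by
  funext k
  simp [piHom, Pi.single_apply, (Fin.castSucc_lt_last k).ne]

lemma tauHom_single (i : Fin m) :
    tauHom m (Pi.single i.castSucc (1 : ℤ)) = 0 := by
  simp [tauHom, Pi.single_apply, (Fin.castSucc_lt_last i).ne']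

lemma tauHom_single_last :
    tauHom m (Pi.single (Fin.last m) (1 : ℤ)) = 1 := by
  simp [tauHom]

lemma iotaHom_single (i : Fin m) :
    iotaHom m (Pi.single i (1 : ℤ)) = Pi.single i.castSucc 1 := by
  funext k
  induction k using Fin.lastCases with
  | last => simp [iotaHom, Pi.single_apply, (Fin.castSucc_lt_last i).ne']
  | cast k => simp [iotaHom, Pi.single_apply, Fin.castSucc_inj]

lemma piHom_iotaHom (v : Fin m → ℤ) : piHom m (iotaHom m v) = v := by
  funext k
  simp [piHom, iotaHom]

end StmtAux

open StmtAux in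
theorem stmt_4 (m r : ℕ) (hm : 1 ≤ m) (M : Matrix (Fin (m + 1)) (Fin r) ℤ)
    (M' : Matrix (Fin m) (Fin r) ℤ)
    (hzero : ∀ j : Fin r, M (Fin.last m) j = 0)
    (hM' : ∀ (i : Fin m) (j : Fin r), M' i j = M i.castSucc j)
    (hloops : ∀ i : Fin m, (Pi.single i (1 : ℤ) : Fin m → ℤ) ∉ colSpan m r M') :
    (SACG (m + 1) r M).chromaticNumber = (SACG m r M').chromaticNumber := by
  -- the subgroup inclusions
  have hpi : colSpan (m + 1) r M ≤ (colSpan m r M').comap (piHom m) := by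
    rw [colSpan, AddSubgroup.closure_le]
    rintro _ ⟨j, rfl⟩
    refine AddSubgroup.subset_closure ⟨j, ?_⟩
    funext i
    simp [piHom, hM']
  have htau : colSpan (m + 1) r M ≤ (tauHom m).ker := by
    rw [colSpan, AddSubgroup.closure_le]
    rintro _ ⟨j, rfl⟩
    simpa [tauHom, AddMonoidHom.mem_ker] using hzero j
  have hiota : colSpan m r M' ≤ (colSpan (m + 1) r M).comap (iotaHom m) := by
    rw [colSpan, AddSubgroup.closure_le]
    rintro _ ⟨j, rfl⟩
    refine AddSubgroup.subset_closure ⟨j, ?_⟩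
    funext i
    induction i using Fin.lastCases with
    | last => simp [iotaHom, hzero]
    | cast i => simp [iotaHom, hM']
  set p : ((Fin (m + 1) → ℤ) ⧸ colSpan (m + 1) r M) →+
      ((Fin m → ℤ) ⧸ colSpan m r M') :=
    QuotientAddGroup.map _ _ (piHom m) hpi with hp
  set t : ((Fin (m + 1) → ℤ) ⧸ colSpan (m + 1) r M) →+ ℤ :=
    QuotientAddGroup.lift _ (tauHom m) htau with ht
  set ι : ((Fin m → ℤ) ⧸ colSpan m r M') →+
      ((Fin (m + 1) → ℤ) ⧸ colSpan (m + 1) r M) :=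
    QuotientAddGroup.map _ _ (iotaHom m) hiota with hι
  have hpι : ∀ a, p (ι a) = a := by
    intro a
    induction a using QuotientAddGroup.induction_on with
    | _ v => rw [hι, hp, QuotientAddGroup.map_mk, QuotientAddGroup.map_mk, piHom_iotaHom]
  -- direction 1 : colorable for the big graph implies colorable for the small one
  have dir1 : ∀ n, (SACG (m + 1) r M).Colorable n → (SACG m r M').Colorable n := by
    rintro n ⟨C⟩
    refine ⟨SimpleGraph.Coloring.mk (fun a => C (ι a)) ?_⟩
    rintro a b ⟨hne, i, hab⟩
    have hadj : (SACG (m + 1) r M).Adj (ι a) (ι b) := by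
      refine ⟨fun h => hne (by rw [← hpι a, ← hpι b, h]), i.castSucc, ?_⟩
      have key : ∀ x y : ((Fin m → ℤ) ⧸ colSpan m r M'),
          x - y = QuotientAddGroup.mk (Pi.single i (1 : ℤ)) →
          ι x - ι y = QuotientAddGroup.mk (Pi.single i.castSucc (1 : ℤ)) := by
        intro x y hxy
        rw [← map_sub, hxy, hι, QuotientAddGroup.map_mk, iotaHom_single]
      rcases hab with h | h
      · exact Or.inl (key _ _ h)
      · exact Or.inr (key _ _ h)
    exact C.valid hadj
  -- direction 2
  have dir2 : ∀ n, (SACG m r M').Colorable n → (SACG (m + 1) r M).Colorable n := by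
    rintro n ⟨C⟩
    -- first, n ≥ 2 because the small graph has an edge
    have hedge : (SACG m r M').Adj (QuotientAddGroup.mk (Pi.single ⟨0, hm⟩ (1 : ℤ))) 0 := by
      refine ⟨?_, ⟨0, hm⟩, Or.inl (by rw [sub_zero])⟩
      intro h
      exact hloops ⟨0, hm⟩ ((QuotientAddGroup.eq_zero_iff _).mp h)
    have hn2 : 2 ≤ n := by
      by_contra hlt
      push_neg at hlt
      interval_cases n
      · exact (C 0).elim0
      · exact C.valid hedge (Subsingleton.elim _ _)
    haveI : NeZero n := ⟨by omega⟩
    haveI : Fact (1 < n) := ⟨hn2⟩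
    -- the coloring of the big graph
    let c : ((Fin (m + 1) → ℤ) ⧸ colSpan (m + 1) r M) → ZMod n :=
      fun x => ((C (p x) : ℕ) : ZMod n) + ((t x : ℤ) : ZMod n)
    have hval : ∀ x y, (SACG (m + 1) r M).Adj x y → c x ≠ c y := by
      have main : ∀ x y, ∀ i : Fin (m + 1),
          x - y = QuotientAddGroup.mk (Pi.single i (1 : ℤ)) → c x ≠ c y := by
        intro x y i hxy
        have hpd : p x - p y = QuotientAddGroup.mk (piHom m (Pi.single i (1 : ℤ))) := by
          rw [← map_sub, hxy, hp, QuotientAddGroup.map_mk]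
        have htd : t x - t y = tauHom m (Pi.single i (1 : ℤ)) := by
          rw [← map_sub, hxy, ht, QuotientAddGroup.lift_mk]
        induction i using Fin.lastCases with
        | last =>
          rw [piHom_single_last] at hpd
          rw [tauHom_single_last] at htd
          have hpe : p x = p y := by
            have : p x - p y = 0 := by rw [hpd]; rfl
            exact sub_eq_zero.mp this
          intro hc
          have : ((t x : ℤ) : ZMod n) = ((t y : ℤ) : ZMod n) := by
            have := hc
            simp only [c, hpe] at this
            exact add_left_cancel this
          have h1 : ((1 : ℤ) : ZMod n) = 0 := by
            have : (((t x - t y : ℤ)) : ZMod n) = 0 := by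
              push_cast
              rw [this]; ring
            rwa [htd] at this
          norm_num at h1
        | cast i =>
          rw [piHom_single i] at hpd
          rw [tauHom_single i] at htd
          have hte : t x = t y := sub_eq_zero.mp htd
          have hpne : p x ≠ p y := by
            intro h
            rw [h, sub_self] at hpd
            exact hloops i ((QuotientAddGroup.eq_zero_iff _).mp hpd.symm)
          have hadj : (SACG m r M').Adj (p x) (p y) := ⟨hpne, i, Or.inl hpd⟩
          have hCne : C (p x) ≠ C (p y) := C.valid hadj
          intro hc
          simp only [c, hte] at hc
          have hcast : ((C (p x) : ℕ) : ZMod n) = ((C (p y) : ℕ) : ZMod n) :=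
            add_right_cancel hc
          apply hCne
          have := congrArg ZMod.val hcast
          rw [ZMod.val_cast_of_lt (C (p x)).is_lt, ZMod.val_cast_of_lt (C (p y)).is_lt] at this
          exact Fin.ext this
      rintro x y ⟨hne, i, h | h⟩
      · exact main x y i h
      · exact (main y x i h).symm
    have : (SACG (m + 1) r M).Colorable (Fintype.card (ZMod n)) :=
      (SimpleGraph.Coloring.mk c fun h => hval _ _ h).colorable
    rwa [ZMod.card] at this
  exact le_antisymm (SimpleGraph.chromaticNumber_le_of_forall_imp dir2)
    (SimpleGraph.chromaticNumber_le_of_forall_imp dir1)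
end

section
/- Let M be an m×r integer matrix such that no standard basis vector of ℤ^m lies in the subgroup H generated by the columns of M. Then the graph M^SACG is bipartite if and only if every column of M has even entry-sum. -/
/-- A graph is bipartite if its vertex set can be partitioned into two sets such that
every edge has one endpoint in each set. -/
def IsBipartite {V : Type*} (G : SimpleGraph V) : Prop :=
  ∃ A B : Set V, (∀ v, v ∈ A ∨ v ∈ B) ∧ (∀ v, ¬(v ∈ A ∧ v ∈ B)) ∧
    ∀ v w, G.Adj v w → (v ∈ A ∧ w ∈ B) ∨ (v ∈ B ∧ w ∈ A)

/-- entry-sum mod 2 homomorphism -/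
def sigma (m : ℕ) : (Fin m → ℤ) →+ ZMod 2 where
  toFun v := ∑ i, (v i : ZMod 2)
  map_zero' := by simp
  map_add' v w := by
    simp only [Pi.add_apply, Int.cast_add]
    exact Finset.sum_add_distrib

lemma sigma_single (m : ℕ) (i : Fin m) : sigma m (Pi.single i (1 : ℤ)) = 1 := by
  classical
  have h : sigma m (Pi.single i (1:ℤ)) = ∑ k, ((Pi.single i (1:ℤ) : Fin m → ℤ) k : ZMod 2) := rfl
  rw [h, Finset.sum_eq_single i]
  · simp
  · intro b _ hb; simp [Pi.single_apply, hb]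
  · simp

theorem stmt_5 (m r : ℕ) (M : Matrix (Fin m) (Fin r) ℤ)
    (hloops : ∀ i : Fin m, (Pi.single i (1 : ℤ) : Fin m → ℤ) ∉ colSpan m r M) :
    IsBipartite (SACG m r M) ↔ ∀ j : Fin r, Even (∑ i : Fin m, M i j) := by
  classical
  have hσcol : ∀ j : Fin r, sigma m (fun i => M i j) = ((∑ i, M i j : ℤ) : ZMod 2) := by
    intro j; simp [sigma]
  constructor
  · rintro ⟨A, B, hcov, hdisj, hadj⟩ j
    set g : ((Fin m → ℤ) ⧸ colSpan m r M) → ZMod 2 :=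
      fun x => if x ∈ A then 0 else 1 with hg
    have key : ∀ (x : (Fin m → ℤ) ⧸ colSpan m r M) (i : Fin m),
        g (x + QuotientAddGroup.mk (Pi.single i (1:ℤ))) = g x + 1 := by
      intro x i
      set y := x + (QuotientAddGroup.mk (Pi.single i (1:ℤ)) : (Fin m → ℤ) ⧸ colSpan m r M)
      have hne : x ≠ y := by
        intro h
        have h0 : (QuotientAddGroup.mk (Pi.single i (1:ℤ)) : (Fin m → ℤ) ⧸ colSpan m r M) = 0 :=
          (left_eq_add.mp h)
        exact hloops i ((QuotientAddGroup.eq_zero_iff _).mp h0)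
      have hA : (SACG m r M).Adj x y := by
        refine ⟨hne, i, Or.inr ?_⟩
        show x + _ - x = _
        abel
      rcases hadj x y hA with ⟨hxA, hyB⟩ | ⟨hxB, hyA⟩
      · have hyA : y ∉ A := fun h => hdisj y ⟨h, hyB⟩
        simp [hg, hxA, hyA]
      · have hxA : x ∉ A := fun h => hdisj x ⟨h, hxB⟩
        simp [hg, hxA, hyA]
        decide
    set S : AddSubgroup (Fin m → ℤ) :=
      { carrier := {w | ∀ x, g (x + QuotientAddGroup.mk w) = g x + sigma m w}
        zero_mem' := by intro x; simp
        add_mem' := by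
          intro a b ha hb x
          have : ((QuotientAddGroup.mk (a + b)) : (Fin m → ℤ) ⧸ colSpan m r M)
              = QuotientAddGroup.mk a + QuotientAddGroup.mk b := rfl
          rw [this, map_add, ← add_assoc, hb, ha, add_assoc]
        neg_mem' := by
          intro a ha x
          have h1 := ha (x + QuotientAddGroup.mk (-a))
          have h2 : x + (QuotientAddGroup.mk (-a) : (Fin m → ℤ) ⧸ colSpan m r M)
              + QuotientAddGroup.mk a = x := by
            have : ((QuotientAddGroup.mk (-a)) : (Fin m → ℤ) ⧸ colSpan m r M)
                = -QuotientAddGroup.mk a := rfl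
            rw [this]; abel
          rw [h2] at h1
          rw [map_neg]
          have h2' : sigma m a + sigma m a = 0 := by
            have : ∀ z : ZMod 2, z + z = 0 := by decide
            exact this _
          calc g (x + QuotientAddGroup.mk (-a))
              = g (x + QuotientAddGroup.mk (-a)) + sigma m a + sigma m a := by
                rw [add_assoc, h2', add_zero]
            _ = g x + sigma m a := by rw [← h1]
            _ = g x + - sigma m a := by
                congr 1
                have : ∀ z : ZMod 2, z = -z := by decide
                exact this _ } with hS
    have hsingle : ∀ i : Fin m, Pi.single i (1:ℤ) ∈ S := by
      intro i x
      rw [sigma_single, key]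
    have htop : ∀ w : Fin m → ℤ, w ∈ S := by
      intro w
      have hw : w = ∑ i, Pi.single i (w i) := (Finset.univ_sum_single w).symm
      rw [hw]
      refine AddSubgroup.sum_mem S fun i _ => ?_
      have : Pi.single i (w i) = (w i) • (Pi.single i (1:ℤ) : Fin m → ℤ) := by
        funext k
        by_cases hk : k = i
        · subst hk; simp
        · simp [Pi.single_apply, hk]
      rw [this]
      exact AddSubgroup.zsmul_mem S (hsingle i) _
    have hcolmem : (fun i => M i j) ∈ colSpan m r M :=
      AddSubgroup.subset_closure ⟨j, rfl⟩
    have hmk0 : (QuotientAddGroup.mk (fun i => M i j) : (Fin m → ℤ) ⧸ colSpan m r M) = 0 :=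
      (QuotientAddGroup.eq_zero_iff _).mpr hcolmem
    have := htop (fun i => M i j) 0
    rw [hmk0, add_zero] at this
    have hσ0 : sigma m (fun i => M i j) = 0 := by
      have := this.symm
      nth_rewrite 2 [← add_zero (g 0)] at this
      exact add_left_cancel this
    rw [hσcol j] at hσ0
    obtain ⟨k, hk⟩ := (ZMod.intCast_zmod_eq_zero_iff_dvd _ 2).mp hσ0
    exact ⟨k, by push_cast at hk; linarith⟩
  · intro heven
    have hker : ∀ w ∈ colSpan m r M, sigma m w = 0 := by
      intro w hw
      have : colSpan m r M ≤ (sigma m).ker := by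
        rw [colSpan, AddSubgroup.closure_le]
        rintro _ ⟨j, rfl⟩
        rw [SetLike.mem_coe, AddMonoidHom.mem_ker]
        show sigma m (fun i => M i j) = 0
        rw [hσcol j]
        obtain ⟨k, hk⟩ := heven j
        rw [ZMod.intCast_zmod_eq_zero_iff_dvd]
        exact ⟨k, by push_cast; linarith⟩
      exact this hw
    set σ' := QuotientAddGroup.lift (colSpan m r M) (sigma m) hker with hσ'
    refine ⟨{x | σ' x = 0}, {x | σ' x = 1}, fun v => ?_, fun v => ?_, ?_⟩
    · have : ∀ z : ZMod 2, z = 0 ∨ z = 1 := by decide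
      exact (this (σ' v)).imp id id
    · rintro ⟨h0, h1⟩
      simp only [Set.mem_setOf_eq] at h0 h1
      rw [h0] at h1; exact absurd h1 (by decide)
    · rintro v w ⟨-, i, h | h⟩
      · have : σ' v - σ' w = 1 := by
          rw [← map_sub, h]
          exact sigma_single m i
        have h2 : ∀ a b : ZMod 2, a - b = 1 → (a = 0 ∧ b = 1) ∨ (a = 1 ∧ b = 0) := by decide
        rcases h2 _ _ this with ⟨ha, hb⟩ | ⟨ha, hb⟩
        · exact Or.inl ⟨ha, hb⟩
        · exact Or.inr ⟨ha, hb⟩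
      · have : σ' w - σ' v = 1 := by
          rw [← map_sub, h]
          exact sigma_single m i
        have h2 : ∀ a b : ZMod 2, a - b = 1 → (a = 0 ∧ b = 1) ∨ (a = 1 ∧ b = 0) := by decide
        rcases h2 _ _ this with ⟨ha, hb⟩ | ⟨ha, hb⟩
        · exact Or.inr ⟨hb, ha⟩
        · exact Or.inl ⟨hb, ha⟩
end

section
/- Let y11, y21, y22 be integers with y11 ≥ 0 and y22 ≥ 0, let M be the 2×2 matrix with rows (y11, 0) and (y21, y22), let X = M^SACG, and let e = gcd(y11, y21, y22). Then: (1) if y22 = 1, or (y11 = 1 and y22 divides y21), or (y11 = 0 and gcd(y21, y22) = 1), then some standard basis vector of ℤ^2 lies in the subgroup generated by the columns of M (X has loops); (2) if y11 + y21 and y22 are both even, then χ(X) = 2; (3) if neither the condition of (1) nor that of (2) holds, and moreover y11 = 0 or y22 = 0 or e > 1 or y22 divides y21, then χ(X) = 3; (4) if none of the conditions in (1)–(3) hold, then there exists an integer q with gcd(y11, y21 + q·y22) = 1, and for any such q, setting a = −y21 − q·y22, b = y11, and n = y11·y22, we have χ(X) = χ(C_n(a,b)). -/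
/-- The Heuberger circulant `C_n(a,b)`: vertices are `ℤ/nℤ`, with distinct `x, y`
adjacent iff `x - y ≡ ±a` or `±b (mod n)`. -/
def HeubergerCirculant (n a b : ℤ) : SimpleGraph (ZMod n.natAbs) where
  Adj x y := x ≠ y ∧ (x - y = (a : ZMod n.natAbs) ∨ x - y = -(a : ZMod n.natAbs) ∨
    x - y = (b : ZMod n.natAbs) ∨ x - y = -(b : ZMod n.natAbs))
  symm := by
    constructor
    rintro x y ⟨hne, h⟩
    refine ⟨hne.symm, ?_⟩
    have hyx : y - x = -(x - y) := by ring
    rcases h with h | h | h | h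
    · exact Or.inr (Or.inl (by rw [hyx, h]))
    · exact Or.inl (by rw [hyx, h, neg_neg])
    · exact Or.inr (Or.inr (Or.inr (by rw [hyx, h])))
    · exact Or.inr (Or.inr (Or.inl (by rw [hyx, h, neg_neg])))
  loopless := by constructor; rintro x ⟨h, -⟩; exact h rfl

lemma mem_colSpan2 {y11 y21 y22 : ℤ} {x : Fin 2 → ℤ} :
    x ∈ colSpan 2 2 !![y11, 0; y21, y22] ↔
      ∃ s t : ℤ, x 0 = s * y11 ∧ x 1 = s * y21 + t * y22 := by
  constructor
  · intro hx
    let K : AddSubgroup (Fin 2 → ℤ) :=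
      { carrier := {z | ∃ s t : ℤ, z 0 = s * y11 ∧ z 1 = s * y21 + t * y22}
        zero_mem' := ⟨0, 0, by simp⟩
        add_mem' := by
          rintro a b ⟨s, t, h1, h2⟩ ⟨s', t', h3, h4⟩
          exact ⟨s + s', t + t', by simp [h1, h3]; ring, by simp [h2, h4]; ring⟩
        neg_mem' := by
          rintro a ⟨s, t, h1, h2⟩
          exact ⟨-s, -t, by simp [h1], by simp [h2]; ring⟩ }
    have hle : colSpan 2 2 !![y11, 0; y21, y22] ≤ K := by
      rw [colSpan, AddSubgroup.closure_le]
      rintro _ ⟨j, rfl⟩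
      fin_cases j
      · exact ⟨1, 0, by norm_num, by norm_num⟩
      · exact ⟨0, 1, by norm_num, by norm_num⟩
    exact hle hx
  · rintro ⟨s, t, h1, h2⟩
    have hc0 : (fun i : Fin 2 => !![y11, 0; y21, y22] i 0) ∈
        colSpan 2 2 !![y11, 0; y21, y22] :=
      AddSubgroup.subset_closure ⟨0, rfl⟩
    have hc1 : (fun i : Fin 2 => !![y11, 0; y21, y22] i 1) ∈
        colSpan 2 2 !![y11, 0; y21, y22] :=
      AddSubgroup.subset_closure ⟨1, rfl⟩
    have hxe : x = s • (fun i : Fin 2 => !![y11, 0; y21, y22] i 0)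
        + t • (fun i : Fin 2 => !![y11, 0; y21, y22] i 1) := by
      funext i
      fin_cases i
      · simpa using h1
      · simp only [Pi.add_apply, Pi.smul_apply, smul_eq_mul]
        simpa using h2
    rw [hxe]
    exact AddSubgroup.add_mem _ (AddSubgroup.zsmul_mem _ hc0 s) (AddSubgroup.zsmul_mem _ hc1 t)

def scr (n r : ℤ) : ZMod 3 := if r = n - 1 then 2 else if r % 2 = 0 then 0 else 1

def sc (n x : ℤ) : ZMod 3 := if n = 0 then (x : ZMod 3) else scr n (x % n)

lemma sc_add_dvd {n m : ℤ} (x : ℤ) (h : n ∣ m) : sc n (x + m) = sc n x := by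
  rcases h with ⟨k, rfl⟩
  by_cases hn : n = 0
  · simp [sc, hn]
  · simp only [sc, if_neg hn, Int.add_mul_emod_self_left]

lemma sc_step {n : ℤ} (x : ℤ) (h0 : 0 ≤ n) (h1 : n ≠ 1) : sc n (x + 1) ≠ sc n x := by
  by_cases hn : n = 0
  · simp only [sc, if_pos hn]
    push_cast
    intro h
    have : (1 : ZMod 3) = 0 := by linear_combination h
    simp at this
  · have h2 : 2 ≤ n := by omega
    simp only [sc, if_neg hn]
    set r := x % n with hr
    have hr0 : 0 ≤ r := Int.emod_nonneg x (by omega)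
    have hrn : r < n := Int.emod_lt_of_pos x (by omega)
    have h1n : (1 : ℤ) % n = 1 := Int.emod_eq_of_lt (by norm_num) (by omega)
    have hx1 : (x + 1) % n = if r = n - 1 then 0 else r + 1 := by
      rw [Int.add_emod, ← hr, h1n]
      split_ifs with h
      · rw [h, show n - 1 + 1 = n from by ring, Int.emod_self]
      · exact Int.emod_eq_of_lt (by omega) (by omega)
    rw [hx1]
    unfold scr
    split_ifs <;> first | decide | (exfalso; omega)

lemma sc_step' {n : ℤ} (x : ℤ) (h0 : 0 ≤ n) (h1 : n ≠ 1) : sc n (x - 1) ≠ sc n x := by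
  have := sc_step (x - 1) h0 h1
  rw [sub_add_cancel] at this
  exact fun h => this h.symm


lemma colorableK {M : Matrix (Fin 2) (Fin 2) ℤ} (k : ℕ) [NeZero k]
    (f : (Fin 2 → ℤ) → ZMod k)
    (hinv : ∀ (x h : Fin 2 → ℤ), h ∈ colSpan 2 2 M → f (x + h) = f x)
    (hprop : ∀ (x : Fin 2 → ℤ) (i : Fin 2), f (x + Pi.single i 1) ≠ f x) :
    (SACG 2 2 M).Colorable k := by
  classical
  have key : ∀ x y : Fin 2 → ℤ,
      (QuotientAddGroup.mk x : _ ⧸ colSpan 2 2 M) = QuotientAddGroup.mk y → f x = f y := by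
    intro x y hxy
    rw [QuotientAddGroup.eq] at hxy
    have h2 := hinv x (-x + y) hxy
    rw [add_neg_cancel_left] at h2
    exact h2.symm
  let c : ((Fin 2 → ℤ) ⧸ colSpan 2 2 M) → ZMod k := fun v => f v.out
  have hc : ∀ x : Fin 2 → ℤ, c (QuotientAddGroup.mk x) = f x := by
    intro x
    exact key _ _ (by rw [QuotientAddGroup.out_eq'])
  have hcard : Fintype.card (ZMod k) = k := ZMod.card k
  rw [← hcard]
  refine (SimpleGraph.Coloring.mk c ?_).colorable
  rintro u v ⟨hne, i, h | h⟩
  · obtain ⟨x, rfl⟩ := QuotientAddGroup.mk_surjective u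
    obtain ⟨y, rfl⟩ := QuotientAddGroup.mk_surjective v
    rw [← QuotientAddGroup.mk_sub] at h
    rw [QuotientAddGroup.eq] at h
    have hfx : f x = f (y + Pi.single i 1) := by
      rw [show x = (y + Pi.single i 1) + (-(-(x - y) + Pi.single i 1)) from by abel]
      exact hinv _ _ (AddSubgroup.neg_mem _ h)
    rw [hc, hc, hfx]
    exact hprop y i
  · obtain ⟨x, rfl⟩ := QuotientAddGroup.mk_surjective u
    obtain ⟨y, rfl⟩ := QuotientAddGroup.mk_surjective v
    rw [← QuotientAddGroup.mk_sub] at h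
    rw [QuotientAddGroup.eq] at h
    have hfy : f y = f (x + Pi.single i 1) := by
      rw [show y = (x + Pi.single i 1) + (-(-(y - x) + Pi.single i 1)) from by abel]
      exact hinv _ _ (AddSubgroup.neg_mem _ h)
    rw [hc, hc]
    exact fun hh => (hprop x i) (by rw [← hfy, hh])

lemma chrom_eq_of {V : Type*} (G : SimpleGraph V) (n : ℕ)
    (h1 : G.Colorable (n + 1)) (h2 : ¬ G.Colorable n) :
    G.chromaticNumber = (n + 1 : ℕ) := by
  refine le_antisymm h1.chromaticNumber_le ?_
  by_contra hlt
  push_neg at hlt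
  have hne : G.chromaticNumber ≠ ⊤ := (lt_of_le_of_lt h1.chromaticNumber_le
    (WithTop.coe_lt_top _)).ne
  lift G.chromaticNumber to ℕ using hne with m hm
  have hmn : m < n + 1 := by exact_mod_cast hlt
  have : m ≤ n := by omega
  exact h2 (SimpleGraph.chromaticNumber_le_iff_colorable.mp
    (by rw [← hm]; exact_mod_cast this))

section lower
variable {y11 y21 y22 : ℤ}

lemma sacg_adj_step (M : Matrix (Fin 2) (Fin 2) ℤ) (x : Fin 2 → ℤ) (i : Fin 2)
    (hE : (Pi.single i 1 : Fin 2 → ℤ) ∉ colSpan 2 2 M) :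
    (SACG 2 2 M).Adj (QuotientAddGroup.mk (x + Pi.single i 1)) (QuotientAddGroup.mk x) := by
  constructor
  · intro hcontra
    rw [QuotientAddGroup.eq] at hcontra
    apply hE
    have := AddSubgroup.neg_mem _ hcontra
    simpa using this
  · refine ⟨i, Or.inl ?_⟩
    rw [← QuotientAddGroup.mk_sub]
    congr 1
    abel

lemma not_colorable2
    (hE1 : (Pi.single 0 1 : Fin 2 → ℤ) ∉ colSpan 2 2 !![y11, 0; y21, y22])
    (hE2 : (Pi.single 1 1 : Fin 2 → ℤ) ∉ colSpan 2 2 !![y11, 0; y21, y22])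
    (hodd : ¬ (Even (y11 + y21) ∧ Even y22)) :
    ¬ (SACG 2 2 !![y11, 0; y21, y22]).Colorable 2 := by
  rintro ⟨C⟩
  set M' := !![y11, 0; y21, y22] with hM'
  have hfin2 : ∀ i : Fin 2, i = 0 ∨ i = 1 := by decide
  classical
  let d : ((Fin 2 → ℤ) ⧸ colSpan 2 2 M') → ZMod 2 := fun v => if C v = 0 then 0 else 1
  have dstep : ∀ u v, (SACG 2 2 M').Adj u v → d u ≠ d v := by
    intro u v hadj
    have hCuv := C.valid hadj
    simp only [d]
    rcases hfin2 (C u) with hu | hu <;> rcases hfin2 (C v) with hv | hv <;>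
      simp [hu, hv] at hCuv ⊢ <;> try decide
  have hE : ∀ i : Fin 2, (Pi.single i 1 : Fin 2 → ℤ) ∉ colSpan 2 2 M' := by
    intro i
    rcases hfin2 i with rfl | rfl
    · exact hE1
    · exact hE2
  have two : ∀ a b : ZMod 2, a ≠ b → a = b + 1 := by decide
  have h2z : (2 : ZMod 2) = 0 := by decide
  let g : (Fin 2 → ℤ) → ZMod 2 :=
    fun x => d (QuotientAddGroup.mk x) + ((x 0 + x 1 : ℤ) : ZMod 2)
  have hsum : ∀ (x : Fin 2 → ℤ) (i : Fin 2),
      (x + (Pi.single i 1 : Fin 2 → ℤ)) 0 + (x + (Pi.single i 1 : Fin 2 → ℤ)) 1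
        = x 0 + x 1 + 1 := by
    intro x i
    rcases hfin2 i with rfl | rfl <;>
      · simp [Pi.single_apply]
        ring
  have gstep : ∀ (x : Fin 2 → ℤ) (i : Fin 2), g (x + Pi.single i 1) = g x := by
    intro x i
    have hd := two _ _ (dstep _ _ (sacg_adj_step M' x i (hE i)))
    simp only [g]
    rw [hsum x i, hd]
    push_cast
    linear_combination h2z
  have gstep' : ∀ (x : Fin 2 → ℤ) (i : Fin 2), g (x - Pi.single i 1) = g x := by
    intro x i
    have := gstep (x - Pi.single i 1) i
    rw [sub_add_cancel] at this
    exact this.symm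
  have gsmul : ∀ (k : ℤ) (x : Fin 2 → ℤ) (i : Fin 2), g (x + Pi.single i k) = g x := by
    intro k
    induction k using Int.induction_on with
    | zero => intro x i; simp
    | succ n ih =>
        intro x i
        have : x + Pi.single i ((n : ℤ) + 1) = (x + Pi.single i (n : ℤ)) + Pi.single i 1 := by
          rw [Pi.single_add]; abel
        rw [this, gstep, ih]
    | pred n ih =>
        intro x i
        have : x + Pi.single i (-(n : ℤ) - 1) = (x + Pi.single i (-(n : ℤ))) - Pi.single i 1 := by
          rw [Pi.single_sub]; abel
        rw [this, gstep', ih]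
  have gconst : ∀ x : Fin 2 → ℤ, g x = g 0 := by
    intro x
    have hdecomp : x = ((0 : Fin 2 → ℤ) + Pi.single 0 (x 0)) + Pi.single 1 (x 1) := by
      funext i
      rcases hfin2 i with rfl | rfl <;> simp [Pi.single_apply]
    rw [hdecomp, gsmul, gsmul]
  have hcol : ∀ v : Fin 2 → ℤ, v ∈ colSpan 2 2 M' → ((v 0 + v 1 : ℤ) : ZMod 2) = 0 := by
    intro v hv
    have h1 := gconst v
    have hmk : (QuotientAddGroup.mk v : (Fin 2 → ℤ) ⧸ colSpan 2 2 M') =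
        QuotientAddGroup.mk 0 := by
      rw [QuotientAddGroup.eq]
      simpa using AddSubgroup.neg_mem _ hv
    simp only [g, hmk] at h1
    simpa using h1
  have hv1 : (![y11, y21] : Fin 2 → ℤ) ∈ colSpan 2 2 M' :=
    mem_colSpan2.mpr ⟨1, 0, by norm_num, by norm_num⟩
  have hv2 : (![0, y22] : Fin 2 → ℤ) ∈ colSpan 2 2 M' :=
    mem_colSpan2.mpr ⟨0, 1, by norm_num, by norm_num⟩
  have he1 : ((y11 + y21 : ℤ) : ZMod 2) = 0 := by simpa using hcol _ hv1
  have he2 : ((y22 : ℤ) : ZMod 2) = 0 := by simpa using hcol _ hv2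
  rw [ZMod.intCast_zmod_eq_zero_iff_dvd] at he1 he2
  exact hodd ⟨even_iff_two_dvd.mpr (by exact_mod_cast he1),
    even_iff_two_dvd.mpr (by exact_mod_cast he2)⟩

end lower

section upper
variable {y11 y21 y22 : ℤ}

lemma box_color (n1 n2 : ℤ) (hp1 : 0 ≤ n1) (hp2 : 0 ≤ n2) (hn1 : n1 ≠ 1) (hn2 : n2 ≠ 1)
    (d1 : n1 ∣ y11) (d2 : n2 ∣ y21) (d3 : n2 ∣ y22) :
    (SACG 2 2 !![y11, 0; y21, y22]).Colorable 3 := by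
  apply colorableK 3 (fun x => sc n1 (x 0) + sc n2 (x 1))
  · intro x h hmem
    obtain ⟨s, t, h1, h2⟩ := mem_colSpan2.mp hmem
    simp only [Pi.add_apply]
    rw [h1, h2, sc_add_dvd _ (Dvd.dvd.mul_left d1 s),
      sc_add_dvd _ (dvd_add (Dvd.dvd.mul_left d2 s) (Dvd.dvd.mul_left d3 t))]
  · intro x i
    have hfin2 : ∀ i : Fin 2, i = 0 ∨ i = 1 := by decide
    rcases hfin2 i with rfl | rfl
    · simp only [Pi.add_apply, Pi.single_apply]
      norm_num
      intro hcon
      exact sc_step (x 0) hp1 hn1 (by linear_combination hcon)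
    · simp only [Pi.add_apply, Pi.single_apply]
      norm_num
      intro hcon
      exact sc_step (x 1) hp2 hn2 (by linear_combination hcon)

lemma shear_color (hy11 : 0 < y11) (hy21 : y21 ≠ 0) (hg : Int.gcd y11 y21 = 1) :
    (SACG 2 2 !![y11, 0; y21, (0 : ℤ)]).Colorable 3 := by
  set s : ℤ := y11 + (y21.natAbs : ℤ) with hs
  have hw : (y21.natAbs : ℤ) = y21 ∨ (y21.natAbs : ℤ) = -y21 := by
    rcases Int.natAbs_eq y21 with h | h
    · exact Or.inl h.symm
    · exact Or.inr (by omega)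
  have hs2 : 2 ≤ s := by
    have : 1 ≤ (y21.natAbs : ℤ) := by
      have := Int.natAbs_pos.mpr hy21
      exact_mod_cast this
    omega
  have hsgcd : IsCoprime y21 s := by
    have hco : IsCoprime y21 y11 := by
      rw [Int.isCoprime_iff_gcd_eq_one, Int.gcd_comm]
      exact hg
    rcases hw with h | h
    · rw [hs, h]
      simpa using (hco.add_mul_left_right 1)
    · rw [hs, h]
      simpa using (hco.add_mul_left_right (-1))
  obtain ⟨u, v, huv⟩ := hsgcd
  have hs0 : (0:ℤ) ≤ s := by omega
  have hs1 : s ≠ 1 := by omega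
  apply colorableK 3 (fun z => sc s (u * (y21 * z 0 - y11 * z 1)))
  · intro x h hmem
    obtain ⟨a, b, h1, h2⟩ := mem_colSpan2.mp hmem
    simp only [Pi.add_apply]
    congr 1
    rw [h1, h2]
    ring
  · intro x i
    have hfin2 : ∀ i : Fin 2, i = 0 ∨ i = 1 := by decide
    rcases hfin2 i with rfl | rfl
    · simp only [Pi.add_apply, Pi.single_apply]
      norm_num
      rw [show u * (y21 * (x 0 + 1) - y11 * x 1)
          = (u * (y21 * x 0 - y11 * x 1) + 1) + s * (-v) from by linear_combination huv]
      rw [sc_add_dvd _ (dvd_mul_right s (-v))]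
      intro hcon
      exact sc_step _ hs0 hs1 hcon
    · simp only [Pi.add_apply, Pi.single_apply]
      norm_num
      rcases hw with h | h
      · rw [show u * (y21 * x 0 - y11 * (x 1 + 1))
            = (u * (y21 * x 0 - y11 * x 1) + 1) + s * (-u - v) from by
          linear_combination huv + u * hs + u * h]
        rw [sc_add_dvd _ (dvd_mul_right s (-u - v))]
        intro hcon
        exact sc_step _ hs0 hs1 hcon
      · rw [show u * (y21 * x 0 - y11 * (x 1 + 1))
            = (u * (y21 * x 0 - y11 * x 1) - 1) + s * (v - u) from by
          linear_combination -huv + u * hs + u * h]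
        rw [sc_add_dvd _ (dvd_mul_right s (v - u))]
        intro hcon
        exact sc_step' _ hs0 hs1 hcon

end upper

lemma exists_q (a b c : ℤ) (ha : a ≠ 0) (h : Int.gcd a (Int.gcd b c) = 1) :
    ∃ q : ℤ, Int.gcd a (b + q * c) = 1 := by
  classical
  set S : Finset ℕ := a.natAbs.primeFactors.filter (fun p => ¬ p ∣ b.natAbs) with hS
  set Qn : ℕ := ∏ p ∈ S, p with hQn
  refine ⟨(Qn : ℤ), ?_⟩
  by_contra hg
  have hgne : Int.gcd a (b + (Qn:ℤ) * c) ≠ 0 := by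
    intro h0
    exact ha ((Int.gcd_eq_zero_iff.mp h0).1)
  obtain ⟨p, hp, hpdvd⟩ := Nat.exists_prime_and_dvd hg
  have hpa : (p : ℤ) ∣ a :=
    dvd_trans (Int.natCast_dvd_natCast.mpr hpdvd)
      (Int.gcd_dvd_left _ _ : (Int.gcd a (b + (Qn:ℤ) * c) : ℤ) ∣ a)
  have hpbc : (p : ℤ) ∣ b + (Qn:ℤ) * c :=
    dvd_trans (Int.natCast_dvd_natCast.mpr hpdvd)
      (Int.gcd_dvd_right _ _ : (Int.gcd a (b + (Qn:ℤ) * c) : ℤ) ∣ _)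
  by_cases hpb : (p : ℤ) ∣ b
  · -- p ∤ Qn
    have hpQ : ¬ (p ∣ Qn) := by
      intro hdvd
      obtain ⟨r, hrS, hpr⟩ := hp.prime.exists_mem_finset_dvd (hQn ▸ hdvd)
      have hrP : Nat.Prime r := Nat.prime_of_mem_primeFactors (Finset.mem_filter.mp hrS).1
      have : p = r := (Nat.prime_dvd_prime_iff_eq hp hrP).mp hpr
      have hnb := (Finset.mem_filter.mp hrS).2
      rw [← this] at hnb
      exact hnb (Int.natCast_dvd.mp hpb)
    have hpc : (p : ℤ) ∣ c := by
      have h1 : (p : ℤ) ∣ (Qn:ℤ) * c := (dvd_add_right hpb).mp hpbc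
      rcases (Nat.prime_iff_prime_int.mp hp).dvd_mul.mp h1 with h2 | h2
      · exact absurd (Int.natCast_dvd.mp h2) (by simpa using hpQ)
      · exact h2
    have hdbc : p ∣ Int.gcd b c :=
      Nat.dvd_gcd (Int.natCast_dvd.mp hpb) (Int.natCast_dvd.mp hpc)
    have : p ∣ Int.gcd a (Int.gcd b c) :=
      Nat.dvd_gcd (Int.natCast_dvd.mp hpa) (by simpa using hdbc)
    rw [h] at this
    exact hp.ne_one (Nat.dvd_one.mp this)
  · have hpS : p ∈ S := by
      rw [hS, Finset.mem_filter]
      refine ⟨Nat.mem_primeFactors.mpr ⟨hp, Int.natCast_dvd.mp hpa, ?_⟩, ?_⟩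
      · simpa using ha
      · intro hcon
        exact hpb (Int.natCast_dvd.mpr hcon)
    have hpQ : p ∣ Qn := Finset.dvd_prod_of_mem _ hpS
    have : (p : ℤ) ∣ b := by
      have h1 : (p : ℤ) ∣ (Qn:ℤ) * c :=
        Dvd.dvd.mul_right (by exact_mod_cast Int.natCast_dvd_natCast.mpr hpQ) c
      exact (dvd_add_left h1).mp hpbc
    exact hpb this

section iso
variable {y11 y21 y22 q : ℤ}

lemma iso_heuberger (h1 : 0 < y11) (h2 : 0 < y22)
    (hq : Int.gcd y11 (y21 + q * y22) = 1) :
    Nonempty ((SACG 2 2 !![y11, 0; y21, y22]) ≃g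
      (HeubergerCirculant (y11 * y22) (-y21 - q * y22) y11)) := by
  classical
  set a : ℤ := -y21 - q * y22 with ha
  set N : ℕ := (y11 * y22).natAbs with hN
  haveI : NeZero N := ⟨by
    simp only [hN, ne_eq, Int.natAbs_eq_zero, mul_eq_zero]
    push_neg
    exact ⟨h1.ne', h2.ne'⟩⟩
  have hNdvd : ∀ z : ℤ, ((z : ZMod N) = 0) ↔ (y11 * y22 ∣ z) := by
    intro z
    rw [ZMod.intCast_zmod_eq_zero_iff_dvd, hN, Int.natAbs_dvd]
  set ψ : (Fin 2 → ℤ) →+ ZMod N :=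
    AddMonoidHom.mk' (fun x => ((a * x 0 + y11 * x 1 : ℤ) : ZMod N))
      (by intro x y; simp only [Pi.add_apply]; push_cast; ring) with hψ
  have hψval : ∀ x : Fin 2 → ℤ, ψ x = ((a * x 0 + y11 * x 1 : ℤ) : ZMod N) := fun _ => rfl
  have hker : colSpan 2 2 !![y11, 0; y21, y22] ≤ ψ.ker := by
    intro h hmem
    obtain ⟨s, t, hx0, hx1⟩ := mem_colSpan2.mp hmem
    rw [AddMonoidHom.mem_ker, hψval, hx0, hx1, hNdvd]
    exact ⟨t - s * q, by rw [ha]; ring⟩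
  set φ : ((Fin 2 → ℤ) ⧸ colSpan 2 2 !![y11, 0; y21, y22]) →+ ZMod N :=
    QuotientAddGroup.lift _ ψ hker with hφ
  have hφmk : ∀ x : Fin 2 → ℤ, φ (QuotientAddGroup.mk x) = ψ x := fun x =>
    QuotientAddGroup.lift_mk _ hker x
  have hco : IsCoprime a y11 := by
    rw [Int.isCoprime_iff_gcd_eq_one]
    have hgg : Int.gcd a y11 = Int.gcd y11 (y21 + q * y22) := by
      rw [Int.gcd_comm, show a = -(y21 + q * y22) from by rw [ha]; ring]
      unfold Int.gcd
      rw [Int.natAbs_neg]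
    rw [hgg, hq]
  have hinj : Function.Injective φ := by
    rw [injective_iff_map_eq_zero]
    intro v hv
    obtain ⟨x, rfl⟩ := QuotientAddGroup.mk_surjective v
    rw [hφmk, hψval, hNdvd] at hv
    have hy11dvd : y11 ∣ a * x 0 := by
      have h3 : y11 ∣ a * x 0 + y11 * x 1 := dvd_trans (dvd_mul_right y11 y22) hv
      have h4 : y11 ∣ y11 * x 1 + a * x 0 := by rwa [add_comm] at h3
      exact (dvd_add_right (dvd_mul_right y11 (x 1))).mp h4
    have hx0 : y11 ∣ x 0 := (hco.symm.dvd_of_dvd_mul_left) hy11dvd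
    obtain ⟨s, hs⟩ := hx0
    have h4 : y11 * y22 ∣ y11 * (a * s + x 1) := by
      rw [show y11 * (a * s + x 1) = a * x 0 + y11 * x 1 from by rw [hs]; ring]
      exact hv
    have h5 : y22 ∣ a * s + x 1 := (mul_dvd_mul_iff_left h1.ne').mp h4
    obtain ⟨t, ht⟩ := h5
    rw [QuotientAddGroup.eq_zero_iff]
    refine mem_colSpan2.mpr ⟨s, q * s + t, by rw [hs]; ring, ?_⟩
    have : x 1 = y22 * t - a * s := by omega
    rw [this, ha]
    ring
  have hone : ∃ w : Fin 2 → ℤ, ψ w = 1 := by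
    obtain ⟨u, v, huv⟩ := hco
    refine ⟨![u, v], ?_⟩
    rw [hψval]
    have : a * (![u, v] : Fin 2 → ℤ) 0 + y11 * (![u, v] : Fin 2 → ℤ) 1 = u * a + v * y11 := by
      simp [Matrix.cons_val_zero, Matrix.cons_val_one]; ring
    rw [this, huv]
    norm_num
  have hsurj : Function.Surjective φ := by
    obtain ⟨w, hw⟩ := hone
    intro z
    refine ⟨QuotientAddGroup.mk ((z.val : ℤ) • w), ?_⟩
    rw [hφmk, map_zsmul, hw, zsmul_eq_mul, mul_one]
    push_cast
    exact ZMod.natCast_rightInverse z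
  set E : ((Fin 2 → ℤ) ⧸ colSpan 2 2 !![y11, 0; y21, y22]) ≃ ZMod N :=
    Equiv.ofBijective φ ⟨hinj, hsurj⟩ with hE
  have hEapp : ∀ v, E v = φ v := fun _ => rfl
  have hfin2 : ∀ i : Fin 2, i = 0 ∨ i = 1 := by decide
  have he0 : φ (QuotientAddGroup.mk (Pi.single (0 : Fin 2) (1:ℤ))) = ((a : ℤ) : ZMod N) := by
    rw [hφmk, hψval]
    norm_num
  have he1 : φ (QuotientAddGroup.mk (Pi.single (1 : Fin 2) (1:ℤ))) = ((y11 : ℤ) : ZMod N) := by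
    rw [hφmk, hψval]
    norm_num
  refine ⟨⟨E, ?_⟩⟩
  intro u v
  constructor
  · rintro ⟨hne, hd⟩
    have hne' : u ≠ v := fun hcon => hne (by rw [hcon])
    refine ⟨hne', ?_⟩
    rw [hEapp, hEapp] at hd
    rcases hd with h | h | h | h
    · refine ⟨0, Or.inl (hinj ?_)⟩
      rw [map_sub, he0]
      exact h
    · refine ⟨0, Or.inr (hinj ?_)⟩
      rw [map_sub, he0]
      linear_combination -h
    · refine ⟨1, Or.inl (hinj ?_)⟩
      rw [map_sub, he1]
      exact h
    · refine ⟨1, Or.inr (hinj ?_)⟩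
      rw [map_sub, he1]
      linear_combination -h
  · rintro ⟨hne, i, h | h⟩
    · have hEne : E u ≠ E v := fun hcon => hne (E.injective hcon)
      refine ⟨hEne, ?_⟩
      rcases hfin2 i with rfl | rfl
      · exact Or.inl (by rw [hEapp, hEapp, ← map_sub, h, he0])
      · exact Or.inr (Or.inr (Or.inl (by rw [hEapp, hEapp, ← map_sub, h, he1])))

    · have hEne : E u ≠ E v := fun hcon => hne (E.injective hcon)
      refine ⟨hEne, ?_⟩
      rcases hfin2 i with rfl | rfl
      · refine Or.inr (Or.inl ?_)
        rw [hEapp, hEapp]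
        have h' := congrArg φ h
        rw [map_sub, he0] at h'
        linear_combination -h'
      · refine Or.inr (Or.inr (Or.inr ?_))
        rw [hEapp, hEapp]
        have h' := congrArg φ h
        rw [map_sub, he1] at h'
        linear_combination -h'

end iso



theorem stmt_9 (y11 y21 y22 : ℤ) (h11 : 0 ≤ y11) (h22 : 0 ≤ y22)
    (M : Matrix (Fin 2) (Fin 2) ℤ) (hM : M = !![y11, 0; y21, y22])
    (e : ℕ) (he : e = Int.gcd y11 (Int.gcd y21 y22)) :
    ((y22 = 1 ∨ (y11 = 1 ∧ y22 ∣ y21) ∨ (y11 = 0 ∧ Int.gcd y21 y22 = 1)) →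
      ∃ i : Fin 2, (Pi.single i (1 : ℤ) : Fin 2 → ℤ) ∈ colSpan 2 2 M) ∧
    ((Even (y11 + y21) ∧ Even y22) → (SACG 2 2 M).chromaticNumber = 2) ∧
    (¬ (y22 = 1 ∨ (y11 = 1 ∧ y22 ∣ y21) ∨ (y11 = 0 ∧ Int.gcd y21 y22 = 1)) →
      ¬ (Even (y11 + y21) ∧ Even y22) →
      (y11 = 0 ∨ y22 = 0 ∨ 1 < e ∨ y22 ∣ y21) →
      (SACG 2 2 M).chromaticNumber = 3) ∧
    (¬ (y22 = 1 ∨ (y11 = 1 ∧ y22 ∣ y21) ∨ (y11 = 0 ∧ Int.gcd y21 y22 = 1)) →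
      ¬ (Even (y11 + y21) ∧ Even y22) →
      ¬ (y11 = 0 ∨ y22 = 0 ∨ 1 < e ∨ y22 ∣ y21) →
      (∃ q : ℤ, Int.gcd y11 (y21 + q * y22) = 1) ∧
      ∀ q : ℤ, Int.gcd y11 (y21 + q * y22) = 1 →
        (SACG 2 2 M).chromaticNumber =
          (HeubergerCirculant (y11 * y22) (-y21 - q * y22) y11).chromaticNumber) := by
  subst hM
  -- characterization of when the standard basis vectors lie in the column span
  have hE1char : (Pi.single (0 : Fin 2) (1:ℤ) : Fin 2 → ℤ) ∈ colSpan 2 2 !![y11, 0; y21, y22]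
      → y11 = 1 ∧ y22 ∣ y21 := by
    intro hmem
    obtain ⟨s, t, hs0, hs1⟩ := mem_colSpan2.mp hmem
    rw [Pi.single_eq_same] at hs0
    rw [Pi.single_eq_of_ne (by decide : (1 : Fin 2) ≠ 0)] at hs1
    have hdvd : y11 ∣ 1 := ⟨s, by linarith [hs0]⟩
    have hy11 : y11 = 1 := Int.eq_one_of_dvd_one h11 hdvd
    have hs : s = 1 := by rw [hy11] at hs0; omega
    refine ⟨hy11, ⟨-t, by rw [hs] at hs1; linarith [hs1]⟩⟩
  have hE2char : (Pi.single (1 : Fin 2) (1:ℤ) : Fin 2 → ℤ) ∈ colSpan 2 2 !![y11, 0; y21, y22]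
      → (y11 ≠ 0 ∧ y22 = 1) ∨ (y11 = 0 ∧ Int.gcd y21 y22 = 1) := by
    intro hmem
    obtain ⟨s, t, hs0, hs1⟩ := mem_colSpan2.mp hmem
    rw [Pi.single_eq_of_ne (by decide : (0 : Fin 2) ≠ 1)] at hs0
    rw [Pi.single_eq_same] at hs1
    by_cases h0 : y11 = 0
    · refine Or.inr ⟨h0, ?_⟩
      have hdvd : (Int.gcd y21 y22 : ℤ) ∣ 1 := by
        rw [hs1]
        exact dvd_add (Dvd.dvd.mul_left (Int.gcd_dvd_left _ _) s) (Dvd.dvd.mul_left (Int.gcd_dvd_right _ _) t)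
      exact_mod_cast Int.eq_one_of_dvd_one (by positivity) hdvd
    · have hszero : s = 0 := by
        rcases mul_eq_zero.mp hs0.symm with h | h
        · exact h
        · exact absurd h h0
      rw [hszero] at hs1
      have : y22 ∣ 1 := ⟨t, by linarith [hs1]⟩
      exact Or.inl ⟨h0, Int.eq_one_of_dvd_one h22 this⟩
  refine ⟨?_, ?_, ?_, ?_⟩
  -- Part (1)
  · rintro (h | ⟨hy1, hdvd⟩ | ⟨h0, hgcd⟩)
    · refine ⟨1, mem_colSpan2.mpr ⟨0, 1, ?_, ?_⟩⟩
      · simp [Pi.single_eq_of_ne (by decide : (0 : Fin 2) ≠ 1)]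
      · simp [Pi.single_eq_same, h]
    · obtain ⟨k, hk⟩ := hdvd
      refine ⟨0, mem_colSpan2.mpr ⟨1, -k, ?_, ?_⟩⟩
      · simp [Pi.single_eq_same, hy1]
      · rw [Pi.single_eq_of_ne (by decide : (1 : Fin 2) ≠ 0), hk]
        ring
    · obtain ⟨u, v, huv⟩ := Int.isCoprime_iff_gcd_eq_one.mpr hgcd
      refine ⟨1, mem_colSpan2.mpr ⟨u, v, ?_, ?_⟩⟩
      · simp [Pi.single_eq_of_ne (by decide : (0 : Fin 2) ≠ 1), h0]
      · rw [Pi.single_eq_same]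
        linarith [huv]
  -- Part (2)
  · rintro ⟨hev1, hev2⟩
    have hE1 : (Pi.single (0 : Fin 2) (1:ℤ) : Fin 2 → ℤ) ∉ colSpan 2 2 !![y11, 0; y21, y22] := by
      intro hmem
      obtain ⟨hy1, hdvd⟩ := hE1char hmem
      have h21even : Even y21 := even_iff_two_dvd.mpr
        ((even_iff_two_dvd.mp hev2).trans hdvd)
      rw [hy1] at hev1
      rw [add_comm] at hev1
      rw [Int.even_add_one] at hev1
      exact hev1 h21even
    have hcol2 : (SACG 2 2 !![y11, 0; y21, y22]).Colorable 2 := by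
      apply colorableK 2 (fun x => ((x 0 + x 1 : ℤ) : ZMod 2))
      · intro x h hmem
        obtain ⟨s, t, h0, h1⟩ := mem_colSpan2.mp hmem
        simp only [Pi.add_apply]
        rw [h0, h1]
        have hc : ((s * (y11 + y21) + t * y22 : ℤ) : ZMod 2) = 0 := by
          rw [ZMod.intCast_zmod_eq_zero_iff_dvd]
          push_cast
          exact dvd_add (Dvd.dvd.mul_left (even_iff_two_dvd.mp hev1) s)
            (Dvd.dvd.mul_left (even_iff_two_dvd.mp hev2) t)
        push_cast at hc ⊢
        linear_combination hc
      · intro x i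
        have hfin2 : ∀ j : Fin 2, j = 0 ∨ j = 1 := by decide
        have hone : (1 : ZMod 2) ≠ 0 := one_ne_zero
        rcases hfin2 i with rfl | rfl
        · simp only [Pi.add_apply, Pi.single_apply]
          norm_num
        · simp only [Pi.add_apply, Pi.single_apply]
          norm_num
    have hnot1 : ¬ (SACG 2 2 !![y11, 0; y21, y22]).Colorable 1 := by
      rintro ⟨C⟩
      exact C.valid (sacg_adj_step _ 0 0 hE1) (Subsingleton.elim _ _)
    have := chrom_eq_of _ 1 hcol2 hnot1
    rw [this]
    norm_num
  -- Part (3)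
  · intro hc1 hc2 hc3
    push_neg at hc1
    obtain ⟨hn22, hn11, hn0⟩ := hc1
    have hE1 : (Pi.single (0 : Fin 2) (1:ℤ) : Fin 2 → ℤ) ∉ colSpan 2 2 !![y11, 0; y21, y22] :=
      fun hmem => hn11 (hE1char hmem).1 (hE1char hmem).2
    have hE2 : (Pi.single (1 : Fin 2) (1:ℤ) : Fin 2 → ℤ) ∉ colSpan 2 2 !![y11, 0; y21, y22] := by
      intro hmem
      rcases hE2char hmem with ⟨-, h⟩ | ⟨h0, hg⟩
      · exact hn22 h
      · exact hn0 h0 hg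
    have hlow := not_colorable2 hE1 hE2 hc2
    have hup : (SACG 2 2 !![y11, 0; y21, y22]).Colorable 3 := by
      by_cases h0 : y11 = 0
      · refine box_color 0 (Int.gcd y21 y22 : ℤ) le_rfl (by positivity) (by decide) ?_
          (zero_dvd_iff.mpr h0) (Int.gcd_dvd_left _ _) (Int.gcd_dvd_right _ _)
        intro hcon
        exact hn0 h0 (by exact_mod_cast hcon)
      · by_cases hdvd : y22 ∣ y21
        · exact box_color y11 y22 h11 h22 (fun hcon => hn11 hcon hdvd) hn22
            dvd_rfl hdvd dvd_rfl
        · by_cases hEe : 1 < e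
          · have hd1 : (e : ℤ) ∣ y11 := he ▸ Int.gcd_dvd_left _ _
            have hd23 : (e : ℤ) ∣ (Int.gcd y21 y22 : ℤ) := he ▸ Int.gcd_dvd_right _ _
            exact box_color (e : ℤ) (e : ℤ) (by positivity) (by positivity)
              (by exact_mod_cast (by omega : e ≠ 1)) (by exact_mod_cast (by omega : e ≠ 1))
              hd1 (hd23.trans (Int.gcd_dvd_left _ _)) (hd23.trans (Int.gcd_dvd_right _ _))
          · have hy22 : y22 = 0 := by tauto
            subst hy22
            have hy21 : y21 ≠ 0 := fun hcon => hdvd (by rw [hcon])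
            have hgcd1 : Int.gcd y11 y21 = 1 := by
              have hee : e = Int.gcd y11 y21 := by
                rw [he, Int.gcd_zero_right]
                simp [Int.gcd, Int.natAbs_abs]
              have hene : e ≠ 0 := by
                rw [hee]
                intro hcon
                exact h0 (Int.gcd_eq_zero_iff.mp hcon).1
              omega
            exact shear_color (lt_of_le_of_ne h11 (Ne.symm h0)) hy21 hgcd1
    have := chrom_eq_of _ 2 hup hlow
    rw [this]
    norm_num
  -- Part (4)
  · intro hc1 hc2 hc3
    push_neg at hc3
    obtain ⟨hy11ne, hy22ne, hele, hndvd⟩ := hc3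
    have hgcd1 : Int.gcd y11 (Int.gcd y21 y22) = 1 := by
      have hene : e ≠ 0 := by
        rw [he]
        intro hcon
        exact hy11ne (Int.gcd_eq_zero_iff.mp hcon).1
      omega
    refine ⟨exists_q y11 y21 y22 hy11ne hgcd1, ?_⟩
    intro q hq
    obtain ⟨iso⟩ := iso_heuberger (lt_of_le_of_ne h11 (Ne.symm hy11ne))
      (lt_of_le_of_ne h22 (Ne.symm hy22ne)) hq
    exact le_antisymm (SimpleGraph.chromaticNumber_mono_of_hom iso.toEmbedding.toHom)
      (SimpleGraph.chromaticNumber_mono_of_hom iso.symm.toEmbedding.toHom)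
end

section
/- Let M be a 3×2 integer matrix with no zero rows such that no standard basis vector of ℤ^3 lies in the subgroup generated by the columns of M (so X = M^SACG has no loops). If some row of M has both entries divisible by 3, then χ(X) ≤ 3. -/
lemma block_ne (q t s : ℕ) (hq : 0 < q) (ht : t < 3*q) (hs1 : q ≤ s) (hs2 : s ≤ 2*q) :
    (t + s) % (3*q) / q ≠ t / q := by
  rcases lt_or_ge (t+s) (3*q) with h | h
  · rw [Nat.mod_eq_of_lt h]
    have h1 : (t+q) / q = t/q + 1 := Nat.add_div_right _ hq
    have h2 : (t+q)/q ≤ (t+s)/q := Nat.div_le_div_right (by omega)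
    omega
  · have htq : q ≤ t := by omega
    have hmod : (t + s) % (3*q) = t + s - 3*q := by
      have h2 : t + s - 3*q < 3*q := by omega
      rw [Nat.mod_eq_sub_mod h, Nat.mod_eq_of_lt h2]
    rw [hmod]
    have h1 : (t + s - 3*q) / q ≤ (t - q) / q := Nat.div_le_div_right (by omega)
    have h2 : (t - q + q)/q = (t-q)/q + 1 := Nat.add_div_right _ hq
    rw [Nat.sub_add_cancel htq] at h2
    omega

lemma colorable_of_wit (M : Matrix (Fin 3) (Fin 2) ℤ) (q : ℕ) (hq : 0 < q) (a : Fin 3 → ℤ)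
    (hdvd : ∀ j : Fin 2, ((3*q : ℕ) : ℤ) ∣ ∑ i, a i * M i j)
    (hmid : ∀ i : Fin 3, (q : ℤ) ≤ a i % (3*q) ∧ a i % (3*q) ≤ 2*q) :
    (SACG 3 2 M).Colorable 3 := by
  haveI : NeZero (3*q) := ⟨by omega⟩
  let g : (Fin 3 → ℤ) →+ ZMod (3*q) := AddMonoidHom.mk'
    (fun z => ((∑ i, a i * z i : ℤ) : ZMod (3*q)))
    (by
      intro z w
      have h : (∑ i, a i * (z + w) i) = (∑ i, a i * z i) + (∑ i, a i * w i) := by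
        rw [← Finset.sum_add_distrib]
        exact Finset.sum_congr rfl fun i _ => by simp [mul_add]
      rw [h, Int.cast_add])
  have hker : colSpan 3 2 M ≤ g.ker := by
    rw [colSpan, AddSubgroup.closure_le]
    rintro _ ⟨j, rfl⟩
    simp only [SetLike.mem_coe, AddMonoidHom.mem_ker]
    show ((∑ i, a i * M i j : ℤ) : ZMod (3*q)) = 0
    rw [ZMod.intCast_zmod_eq_zero_iff_dvd]
    exact_mod_cast hdvd j
  let gbar := QuotientAddGroup.lift _ g hker
  have hsingle : ∀ i : Fin 3, g (Pi.single i (1:ℤ)) = ((a i : ℤ) : ZMod (3*q)) := by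
    intro i
    have h : ∀ z : Fin 3 → ℤ, g z = ((∑ k, a k * z k : ℤ) : ZMod (3*q)) := fun z => rfl
    rw [h]
    congr 1
    simp [Pi.single_apply, mul_ite]
  have key : ∀ (zv : ZMod (3*q)) (i : Fin 3),
      ((zv + ((a i : ℤ) : ZMod (3*q))).val / q) ≠ (zv.val / q) := by
    intro zv i
    have hval := ZMod.val_intCast (n := 3*q) (a i)
    have hmid' := hmid i
    have hsv1 : q ≤ ((a i : ℤ) : ZMod (3*q)).val := by
      have : ((((a i : ℤ) : ZMod (3*q)).val : ℤ)) = a i % (3*q) := by exact_mod_cast hval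
      omega
    have hsv2 : ((a i : ℤ) : ZMod (3*q)).val ≤ 2*q := by
      have : ((((a i : ℤ) : ZMod (3*q)).val : ℤ)) = a i % (3*q) := by exact_mod_cast hval
      omega
    rw [ZMod.val_add]
    exact block_ne q zv.val _ hq (ZMod.val_lt zv) hsv1 hsv2
  refine ⟨SimpleGraph.Coloring.mk
    (fun x => ⟨(gbar x).val / q, by
      have h1 : (gbar x).val < 3*q := ZMod.val_lt _
      exact (Nat.div_lt_iff_lt_mul hq).2 (by omega)⟩) ?_⟩
  rintro x y ⟨hne, i, hcase | hcase⟩ hc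
  · have h1 : gbar x - gbar y = ((a i : ℤ) : ZMod (3*q)) := by
      rw [← map_sub, hcase]
      exact (QuotientAddGroup.lift_mk _ hker _).trans (hsingle i)
    have h2 : gbar x = gbar y + ((a i : ℤ) : ZMod (3*q)) := by
      rw [← h1]; ring
    have := key (gbar y) i
    rw [← h2] at this
    exact this (by simpa using congrArg Fin.val hc)
  · have h1 : gbar y - gbar x = ((a i : ℤ) : ZMod (3*q)) := by
      rw [← map_sub, hcase]
      exact (QuotientAddGroup.lift_mk _ hker _).trans (hsingle i)
    have h2 : gbar y = gbar x + ((a i : ℤ) : ZMod (3*q)) := by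
      rw [← h1]; ring
    have := key (gbar x) i
    rw [← h2] at this
    exact this (by simpa using (congrArg Fin.val hc).symm)


def Mid (T y : ℤ) : Prop := T ≤ 3 * (y % T) ∧ 3 * (y % T) ≤ 2 * T

lemma mid_of (T y v : ℤ) (h : y % T = v) (h1 : T ≤ 3*v) (h2 : 3*v ≤ 2*T) : Mid T y :=
  ⟨by rw [h]; linarith, by rw [h]; linarith⟩

lemma mid_mul' (g f m : ℤ) (hg : 0 < g) (hf : 0 < f)
    (h1 : f ≤ m % (3*f)) (h2 : m % (3*f) ≤ 2*f) : Mid (3*(g*f)) (g*m) := by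
  have hmod : (g*m) % (3*(g*f)) = g*(m % (3*f)) := by
    rw [show (3:ℤ)*(g*f) = g*(3*f) by ring]
    exact Int.mul_emod_mul_of_pos _ _ hg
  have e1 := mul_le_mul_of_nonneg_left h1 hg.le
  have e2 := mul_le_mul_of_nonneg_left h2 hg.le
  exact ⟨by rw [hmod]; linarith, by rw [hmod]; linarith⟩

lemma mid_neg (T y : ℤ) (hT : 0 < T) (h : Mid T y) : Mid T (-y) := by
  obtain ⟨h1, h2⟩ := h
  have hy0 : 0 ≤ y % T := Int.emod_nonneg _ hT.ne'
  have hyT : y % T < T := Int.emod_lt_of_pos _ hT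
  have hne : (-y) % T = T - y % T := by
    have hd : -y = (T - y % T) + T * (-(y / T) - 1) := by
      have h3 := Int.emod_add_mul_ediv y T
      linarith
    rw [hd, Int.add_mul_emod_self_left]
    exact Int.emod_eq_of_lt (by omega) (by omega)
  exact ⟨by rw [hne]; omega, by rw [hne]; omega⟩

lemma correct (T a0 : ℤ) (hT : 0 < T) :
    ∃ c : ℤ, Mid (3*T) (3*a0 + c*T) ∧ (c = 0 ∨ c = 1 ∨ c = 2) := by
  have hr0 : 0 ≤ a0 % T := Int.emod_nonneg _ hT.ne'
  have hrT : a0 % T < T := Int.emod_lt_of_pos _ hT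
  have h3 : (3*a0) % (3*T) = 3*(a0 % T) := Int.mul_emod_mul_of_pos _ _ (by norm_num)
  have hED : a0 % T + T * (a0 / T) = a0 := Int.emod_add_mul_ediv a0 T
  have hadd : ∀ c : ℤ, (3*a0 + c*T) % (3*T) = (3*(a0 % T) + c*T) % (3*T) := by
    intro c
    exact (Int.modEq_iff_dvd.mpr ⟨-(a0/T), by linear_combination 3*hED⟩ :
      Int.ModEq (3*T) (3*a0 + c*T) (3*(a0 % T) + c*T))
  set r := a0 % T with hr
  rcases lt_or_ge (3*r) T with hc | hc
  · refine ⟨1, ?_, by tauto⟩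
    refine mid_of (3*T) _ (3*r + T) ?_ (by omega) (by omega)
    rw [hadd, show 3*r + 1*T = 3*r + T from by ring]
    exact Int.emod_eq_of_lt (by omega) (by omega)
  rcases le_or_gt (3*r) (2*T) with hc2 | hc2
  · refine ⟨0, ?_, by tauto⟩
    refine mid_of (3*T) _ (3*r) ?_ (by omega) (by omega)
    rw [hadd, show 3*r + 0*T = 3*r from by ring]
    exact Int.emod_eq_of_lt (by omega) (by omega)
  · refine ⟨2, ?_, by tauto⟩
    refine mid_of (3*T) _ (3*r - T) ?_ (by omega) (by omega)
    rw [hadd, show 3*r + 2*T = (3*r - T) + (3*T)*1 by ring, Int.add_mul_emod_self_left]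
    exact Int.emod_eq_of_lt (by omega) (by omega)

lemma two_runner_pos (A B : ℤ) (hA : 0 < A) (hB : 0 < B) :
    ∃ T x : ℤ, 0 < T ∧ 3 ∣ T ∧ Mid T (A*x) ∧ Mid T (B*x) := by
  set gn := Int.gcd A B with hgn
  have hgpos : 0 < gn := Int.gcd_pos_of_ne_zero_left _ hA.ne'
  set g : ℤ := (gn : ℤ) with hgI
  have hg : 0 < g := by rw [hgI]; exact_mod_cast hgpos
  set e := A / g with he
  set f := B / g with hf
  have hge : g * e = A := Int.mul_ediv_cancel' (Int.gcd_dvd_left _ _)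
  have hgf : g * f = B := Int.mul_ediv_cancel' (Int.gcd_dvd_right _ _)
  have hepos : 0 < e := by
    rcases le_or_gt e 0 with h | h
    · nlinarith [mul_nonneg hg.le (neg_nonneg.2 h)]
    · exact h
  have hfpos : 0 < f := by
    rcases le_or_gt f 0 with h | h
    · nlinarith [mul_nonneg hg.le (neg_nonneg.2 h)]
    · exact h
  have hcop : Int.gcd e f = 1 := Int.gcd_div_gcd_div_gcd hgpos
  rcases le_or_gt 2 f with hf2 | hf1
  · -- f ≥ 2
    have hbez : (1:ℤ) = e * Int.gcdA e f + f * Int.gcdB e f := by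
      have h := Int.gcd_eq_gcd_ab e f
      rwa [hcop] at h
    set e' := Int.gcdA e f with he'
    set f' := Int.gcdB e f with hf'
    set y := f + (e - f) % 3 with hy
    have hy3 : (3:ℤ) ∣ y - e := by omega
    obtain ⟨D, hD⟩ := hy3
    set x := 1 + 3*(e'*D) with hx
    have hdvd : y - e*x = (3*f)*(D*f') := by
      rw [hx]; linear_combination hD + (3*D)*hbez
    have hmod : (e*x) % (3*f) = y := by
      have heq : (e*x) % (3*f) = y % (3*f) := Int.modEq_iff_dvd.mpr ⟨D*f', hdvd⟩
      rw [heq]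
      exact Int.emod_eq_of_lt (by omega) (by omega)
    refine ⟨3*(g*f), x, by nlinarith, ⟨g*f, by ring⟩, ?_, ?_⟩
    · have hAx : A * x = g * (e * x) := by rw [← hge]; ring
      rw [hAx]
      exact mid_mul' g f (e*x) hg (by omega) (by rw [hmod]; omega) (by rw [hmod]; omega)
    · have hBx : B * x = g * (f * x) := by rw [← hgf]; ring
      rw [hBx]
      have hmodB : (f*x) % (3*f) = f := by
        rw [show f*x = f + (3*f)*(e'*D) by rw [hx]; ring, Int.add_mul_emod_self_left]
        exact Int.emod_eq_of_lt (by omega) (by omega)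
      exact mid_mul' g f (f*x) hg (by omega) (by rw [hmodB]) (by rw [hmodB]; omega)
  · -- f = 1
    have hf1' : f = 1 := by omega
    by_cases h3e : (3:ℤ) ∣ e
    · -- 3 ∣ e, e ≥ 3
      have he3 : 3 ≤ e := by omega
      obtain ⟨k, hk⟩ := h3e
      refine ⟨3*(g*e), e+1, by nlinarith, ⟨g*e, by ring⟩, ?_, ?_⟩
      · have hAx : A * (e+1) = g * (e*(e+1)) := by rw [← hge]; ring
        rw [hAx]
        have hmod : (e*(e+1)) % (3*e) = e := by
          rw [show e*(e+1) = e + (3*e)*k by rw [hk]; ring, Int.add_mul_emod_self_left]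
          exact Int.emod_eq_of_lt (by omega) (by omega)
        exact mid_mul' g e _ hg (by omega) (by rw [hmod]) (by rw [hmod]; omega)
      · have hBx : B * (e+1) = g * (e+1) := by rw [← hgf, hf1']; ring
        rw [hBx]
        have hmod : (e+1) % (3*e) = e+1 := Int.emod_eq_of_lt (by omega) (by omega)
        exact mid_mul' g e (e+1) hg (by omega) (by rw [hmod]; omega) (by rw [hmod]; omega)
    · -- 3 ∤ e
      refine ⟨3*(g*1), 1, by nlinarith, ⟨g*1, by ring⟩, ?_, ?_⟩
      · have hAx : A * 1 = g * e := by rw [← hge]; ring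
        rw [hAx]
        exact mid_mul' g 1 e hg one_pos (by omega) (by omega)
      · have hBx : B * 1 = g * 1 := by rw [← hgf, hf1']; ring
        rw [hBx]
        exact mid_mul' g 1 1 hg one_pos (by norm_num) (by norm_num)

lemma two_runner (A B : ℤ) (hA : A ≠ 0) (hB : B ≠ 0) :
    ∃ T x : ℤ, 0 < T ∧ 3 ∣ T ∧ Mid T (A*x) ∧ Mid T (B*x) := by
  obtain ⟨T, x, hT, h3, hMA, hMB⟩ := two_runner_pos |A| |B| (abs_pos.2 hA) (abs_pos.2 hB)
  refine ⟨T, x, hT, h3, ?_, ?_⟩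
  · rcases abs_cases A with ⟨h, _⟩ | ⟨h, _⟩
    · rwa [h] at hMA
    · have := mid_neg _ _ hT hMA
      rwa [h, show -(-A*x) = A*x by ring] at this
  · rcases abs_cases B with ⟨h, _⟩ | ⟨h, _⟩
    · rwa [h] at hMB
    · have := mid_neg _ _ hT hMB
      rwa [h, show -(-B*x) = B*x by ring] at this

lemma mid_of_bounds (T y : ℤ) (h0 : 0 ≤ y) (h1 : y < T) (h2 : T ≤ 3*y) (h3 : 3*y ≤ 2*T) :
    Mid T y := mid_of T y y (Int.emod_eq_of_lt h0 h1) h2 h3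

lemma innerPar (G z0 z1 u0 u1 μ p q : ℤ) (hG : 0 < G)
    (hd2 : 2 ≤ u0*z1 - u1*z0) (hbez : z0*p + z1*q = 1) :
    ∃ T a0 a1 a2 : ℤ, 0 < T ∧ 3 ∣ T ∧
      T ∣ (a0*(3*(G*z0)) + a1*u0 + a2*((μ*z0))) ∧
      T ∣ (a0*(3*(G*z1)) + a1*u1 + a2*((μ*z1))) ∧
      Mid T a1 ∧ Mid T a2 := by
  set d := u0*z1 - u1*z0 with hd
  set C := d / 2 with hC
  have hCb : 1 ≤ C ∧ C < d ∧ d ≤ 3*C ∧ 3*C ≤ 2*d := by omega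
  have hdpos : 0 < d := by omega
  have hp1 : 0 < G*C := mul_pos hG (by omega)
  have hp2 : G*C < G*d := mul_lt_mul_of_pos_left (by omega) hG
  have hp3 : G*d ≤ G*(3*C) := mul_le_mul_of_nonneg_left (by omega) hG.le
  have hp4 : G*(3*C) ≤ G*(2*d) := mul_le_mul_of_nonneg_left (by omega) hG.le
  have hp5 : 0 < G*d := mul_pos hG hdpos
  refine ⟨6*G*d, -2*C*(u0*p+u1*q) - μ*d, 6*G*C, 3*G*d, by nlinarith, ⟨2*G*d, by ring⟩,
    ⟨C*q, by linear_combination (-6*G*C*u0)*hbez + (-6*G*C*q)*hd⟩,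
    ⟨-(C*p), by linear_combination (-6*G*C*u1)*hbez + (6*G*C*p)*hd⟩,
    mid_of_bounds _ _ (by nlinarith) (by nlinarith) (by nlinarith) (by nlinarith),
    mid_of_bounds _ _ (by nlinarith) (by nlinarith) (by nlinarith) (by nlinarith)⟩

lemma caseParallel (w0 w1 u0 u1 v0 v1 : ℤ)
    (hw : ¬(w0 = 0 ∧ w1 = 0))
    (hE : w0*v1 - w1*v0 = 0)
    (hF : w0*u1 - w1*u0 ≠ 0)
    (hl1 : ¬ ∃ s t : ℤ, s*(3*w0) + t*(3*w1) = 0 ∧ s*u0 + t*u1 = 1 ∧ s*v0 + t*v1 = 0) :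
    ∃ T a0 a1 a2 : ℤ, 0 < T ∧ 3 ∣ T ∧
      T ∣ (a0*(3*w0) + a1*u0 + a2*v0) ∧ T ∣ (a0*(3*w1) + a1*u1 + a2*v1) ∧
      Mid T a1 ∧ Mid T a2 := by
  set G : ℤ := (Int.gcd w0 w1 : ℤ) with hG
  have hGpos : 0 < G := by
    rw [hG]
    exact_mod_cast Int.gcd_pos_iff.mpr (by tauto)
  set z0 := w0 / G with hz0d
  set z1 := w1 / G with hz1d
  have hz0 : G * z0 = w0 := Int.mul_ediv_cancel' (Int.gcd_dvd_left _ _)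
  have hz1 : G * z1 = w1 := Int.mul_ediv_cancel' (Int.gcd_dvd_right _ _)
  have hcop : Int.gcd z0 z1 = 1 := Int.gcd_div_gcd_div_gcd (by
    rcases Int.gcd_pos_iff.mpr (show w0 ≠ 0 ∨ w1 ≠ 0 by tauto) with h
    exact h)
  have hbez : z0 * (Int.gcdA z0 z1) + z1 * (Int.gcdB z0 z1) = 1 := by
    have h := Int.gcd_eq_gcd_ab z0 z1
    rw [hcop] at h
    exact_mod_cast h.symm
  set p := Int.gcdA z0 z1 with hp
  set q := Int.gcdB z0 z1 with hq
  have hzv : z0 * v1 = z1 * v0 :=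
    mul_left_cancel₀ hGpos.ne' (by linear_combination v1*hz0 - v0*hz1 + hE)
  set μ := p*v0 + q*v1 with hμ
  have hμ0 : μ * z0 = v0 := by linear_combination v0*hbez + q*hzv
  have hμ1 : μ * z1 = v1 := by linear_combination v1*hbez - p*hzv
  set d := u0*z1 - u1*z0 with hd
  have hdne : d ≠ 0 := by
    intro h
    exact hF (by linear_combination (-u1)*hz0 + u0*hz1 + G*hd - G*h)
  have hd2 : 2 ≤ d ∨ d ≤ -2 := by
    by_contra hcon
    have hd1 : d = 1 ∨ d = -1 := by omega
    have hdd : d*d = 1 := by rcases hd1 with h | h <;> rw [h] <;> norm_num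
    exact hl1 ⟨d*z1, -(d*z0),
      by linear_combination (-3*d*z1)*hz0 + (3*d*z0)*hz1,
      by linear_combination hdd - d*hd,
      by linear_combination (-d*z1)*hμ0 + (d*z0)*hμ1⟩
  rcases hd2 with hd2 | hd2
  · obtain ⟨T, a0, a1, a2, hT, h3, hdv0, hdv1, hm1, hm2⟩ :=
      innerPar G z0 z1 u0 u1 μ p q hGpos (by omega) hbez
    refine ⟨T, a0, a1, a2, hT, h3, ?_, ?_, hm1, hm2⟩
    · have heq : a0*(3*w0) + a1*u0 + a2*v0 = a0*(3*(G*z0)) + a1*u0 + a2*(μ*z0) := by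
        rw [hz0, hμ0]
      rw [heq]; exact hdv0
    · have heq : a0*(3*w1) + a1*u1 + a2*v1 = a0*(3*(G*z1)) + a1*u1 + a2*(μ*z1) := by
        rw [hz1, hμ1]
      rw [heq]; exact hdv1
  · obtain ⟨T, a0, a1, a2, hT, h3, hdv0, hdv1, hm1, hm2⟩ :=
      innerPar G (-z0) (-z1) u0 u1 (-μ) (-p) (-q) hGpos
        (by rw [show u0 * -z1 - u1 * -z0 = -(u0*z1 - u1*z0) from by ring]; omega)
        (by linear_combination hbez)
    refine ⟨T, -a0, a1, a2, hT, h3, ?_, ?_, hm1, hm2⟩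
    · have heq : (-a0)*(3*w0) + a1*u0 + a2*v0
          = a0*(3*(G*(-z0))) + a1*u0 + a2*((-μ)*(-z0)) := by
        rw [← hz0, ← hμ0]; ring
      rw [heq]; exact hdv0
    · have heq : (-a0)*(3*w1) + a1*u1 + a2*v1
          = a0*(3*(G*(-z1))) + a1*u1 + a2*((-μ)*(-z1)) := by
        rw [← hz1, ← hμ1]; ring
      rw [heq]; exact hdv1

lemma core (w0 w1 u0 u1 v0 v1 : ℤ)
    (hw : ¬(w0 = 0 ∧ w1 = 0))
    (hl1 : ¬ ∃ s t : ℤ, s*(3*w0) + t*(3*w1) = 0 ∧ s*u0 + t*u1 = 1 ∧ s*v0 + t*v1 = 0)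
    (hl2 : ¬ ∃ s t : ℤ, s*(3*w0) + t*(3*w1) = 0 ∧ s*u0 + t*u1 = 0 ∧ s*v0 + t*v1 = 1)
    (htr : ∀ A B : ℤ, A ≠ 0 → B ≠ 0 →
      ∃ T x : ℤ, 0 < T ∧ 3 ∣ T ∧ Mid T (A*x) ∧ Mid T (B*x)) :
    ∃ T a0 a1 a2 : ℤ, 0 < T ∧ 3 ∣ T ∧
      T ∣ (a0*(3*w0) + a1*u0 + a2*v0) ∧ T ∣ (a0*(3*w1) + a1*u1 + a2*v1) ∧
      Mid T a1 ∧ Mid T a2 := by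
  by_cases hE : w0*v1 - w1*v0 = 0
  · by_cases hF : w0*u1 - w1*u0 = 0
    · -- all rows parallel
      set G : ℤ := (Int.gcd w0 w1 : ℤ) with hG
      have hGpos : 0 < G := by
        rw [hG]
        exact_mod_cast Int.gcd_pos_iff.mpr (by tauto)
      set z0 := w0 / G with hz0d
      set z1 := w1 / G with hz1d
      have hz0 : G * z0 = w0 := Int.mul_ediv_cancel' (Int.gcd_dvd_left _ _)
      have hz1 : G * z1 = w1 := Int.mul_ediv_cancel' (Int.gcd_dvd_right _ _)
      have hcop : Int.gcd z0 z1 = 1 := Int.gcd_div_gcd_div_gcd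
        (Int.gcd_pos_iff.mpr (show w0 ≠ 0 ∨ w1 ≠ 0 by tauto))
      have hbez : z0 * (Int.gcdA z0 z1) + z1 * (Int.gcdB z0 z1) = 1 := by
        have h := Int.gcd_eq_gcd_ab z0 z1
        rw [hcop] at h
        exact_mod_cast h.symm
      set p := Int.gcdA z0 z1 with hp
      set q := Int.gcdB z0 z1 with hq
      have hzv : z0 * v1 = z1 * v0 :=
        mul_left_cancel₀ hGpos.ne' (by linear_combination v1*hz0 - v0*hz1 + hE)
      have hzu : z0 * u1 = z1 * u0 :=
        mul_left_cancel₀ hGpos.ne' (by linear_combination u1*hz0 - u0*hz1 + hF)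
      set μ := p*v0 + q*v1 with hμ
      have hμ0 : μ * z0 = v0 := by linear_combination v0*hbez + q*hzv
      have hμ1 : μ * z1 = v1 := by linear_combination v1*hbez - p*hzv
      set ν := p*u0 + q*u1 with hν
      have hν0 : ν * z0 = u0 := by linear_combination u0*hbez + q*hzu
      have hν1 : ν * z1 = u1 := by linear_combination u1*hbez - p*hzu
      refine ⟨6*G, -(ν+μ), 3*G, 3*G, by linarith, ⟨2*G, by ring⟩,
        ⟨0, by linear_combination (3*(ν+μ))*hz0 - 3*G*hν0 - 3*G*hμ0⟩,
        ⟨0, by linear_combination (3*(ν+μ))*hz1 - 3*G*hν1 - 3*G*hμ1⟩,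
        mid_of_bounds _ _ (by linarith) (by linarith) (by linarith) (by linarith),
        mid_of_bounds _ _ (by linarith) (by linarith) (by linarith) (by linarith)⟩
    · -- w ∥ v, u independent : caseParallel directly
      exact caseParallel w0 w1 u0 u1 v0 v1 hw hE hF hl1
  · by_cases hF : w0*u1 - w1*u0 = 0
    · -- w ∥ u : caseParallel with u,v swapped
      obtain ⟨T, a0, a1, a2, hT, h3, hdv0, hdv1, hm1, hm2⟩ :=
        caseParallel w0 w1 v0 v1 u0 u1 hw hF hE
          (fun ⟨s, t, h1, h2, h3⟩ => hl2 ⟨s, t, h1, h3, h2⟩)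
      refine ⟨T, a0, a2, a1, hT, h3, ?_, ?_, hm2, hm1⟩
      · rw [show a0*(3*w0) + a2*u0 + a1*v0 = a0*(3*w0) + a1*v0 + a2*u0 from by ring]
        exact hdv0
      · rw [show a0*(3*w1) + a2*u1 + a1*v1 = a0*(3*w1) + a1*v1 + a2*u1 from by ring]
        exact hdv1
    · -- generic case : two runners on kernel vector
      obtain ⟨T, x, hT, h3, hmA, hmB⟩ :=
        htr (-(3*(w0*v1 - w1*v0))) (3*(w0*u1 - w1*u0)) (by omega) (by omega)
      exact ⟨T, (u0*v1 - u1*v0)*x, (-(3*(w0*v1 - w1*v0)))*x, (3*(w0*u1 - w1*u0))*x,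
        hT, h3, ⟨0, by ring⟩, ⟨0, by ring⟩, hmA, hmB⟩

lemma mid_scale (T y : ℤ) (hT : 0 < T) (h : Mid T y) : Mid (3*T) (3*y) := by
  have h3 : (3*y) % (3*T) = 3*(y % T) := Int.mul_emod_mul_of_pos _ _ (by norm_num)
  exact ⟨by rw [h3]; linarith [h.1], by rw [h3]; linarith [h.2]⟩

lemma assemble (M : Matrix (Fin 3) (Fin 2) ℤ) (i0 i1 i2 : Fin 3)
    (hne01 : i0 ≠ i1) (hne02 : i0 ≠ i2) (hne12 : i1 ≠ i2)
    (hcover : ∀ x : Fin 3, x = i0 ∨ x = i1 ∨ x = i2)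
    (w0 w1 : ℤ) (hw0 : M i0 0 = 3*w0) (hw1 : M i0 1 = 3*w1)
    (hrows : ∀ i : Fin 3, ¬ (M i 0 = 0 ∧ M i 1 = 0))
    (hloops : ∀ i : Fin 3, (Pi.single i (1 : ℤ) : Fin 3 → ℤ) ∉ colSpan 3 2 M) :
    (SACG 3 2 M).chromaticNumber ≤ 3 := by
  have hcol : ∀ j : Fin 2, (fun i => M i j) ∈ colSpan 3 2 M :=
    fun j => AddSubgroup.subset_closure ⟨j, rfl⟩
  have hmem : ∀ s t : ℤ,
      (s • (fun i => M i 0) + t • (fun i => M i 1)) ∈ colSpan 3 2 M := fun s t =>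
    AddSubgroup.add_mem _ (AddSubgroup.zsmul_mem _ (hcol 0) s)
      (AddSubgroup.zsmul_mem _ (hcol 1) t)
  have hw : ¬(w0 = 0 ∧ w1 = 0) := by
    rintro ⟨rfl, rfl⟩
    exact hrows i0 ⟨by rw [hw0]; ring, by rw [hw1]; ring⟩
  have hl1 : ¬ ∃ s t : ℤ, s*(3*w0) + t*(3*w1) = 0 ∧
      s*(M i1 0) + t*(M i1 1) = 1 ∧ s*(M i2 0) + t*(M i2 1) = 0 := by
    rintro ⟨s, t, h1, h2, h3⟩
    apply hloops i1
    have heq : (Pi.single i1 (1:ℤ) : Fin 3 → ℤ)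
        = s • (fun i => M i 0) + t • (fun i => M i 1) := by
      funext x
      rcases hcover x with h | h | h <;> subst h <;>
        simp only [Pi.add_apply, Pi.smul_apply, smul_eq_mul]
      · rw [Pi.single_eq_of_ne hne01, hw0, hw1]; linarith
      · rw [Pi.single_eq_same]; linarith
      · rw [Pi.single_eq_of_ne hne12.symm]; linarith
    rw [heq]; exact hmem s t
  have hl2 : ¬ ∃ s t : ℤ, s*(3*w0) + t*(3*w1) = 0 ∧
      s*(M i1 0) + t*(M i1 1) = 0 ∧ s*(M i2 0) + t*(M i2 1) = 1 := by
    rintro ⟨s, t, h1, h2, h3⟩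
    apply hloops i2
    have heq : (Pi.single i2 (1:ℤ) : Fin 3 → ℤ)
        = s • (fun i => M i 0) + t • (fun i => M i 1) := by
      funext x
      rcases hcover x with h | h | h <;> subst h <;>
        simp only [Pi.add_apply, Pi.smul_apply, smul_eq_mul]
      · rw [Pi.single_eq_of_ne hne02, hw0, hw1]; linarith
      · rw [Pi.single_eq_of_ne hne12]; linarith
      · rw [Pi.single_eq_same]; linarith
    rw [heq]; exact hmem s t
  obtain ⟨T, a0, a1, a2, hT, h3T, hdv0, hdv1, hm1, hm2⟩ :=
    core w0 w1 (M i1 0) (M i1 1) (M i2 0) (M i2 1) hw hl1 hl2 two_runner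
  obtain ⟨c, hmid0, -⟩ := correct T a0 hT
  set b : Fin 3 → ℤ := fun x => if x = i0 then 3*a0 + c*T else if x = i1 then 3*a1 else 3*a2
    with hb
  have hb0 : b i0 = 3*a0 + c*T := by rw [hb]; simp
  have hb1 : b i1 = 3*a1 := by rw [hb]; simp [hne01.symm]
  have hb2 : b i2 = 3*a2 := by rw [hb]; simp [hne02.symm, hne12.symm]
  have huniv : (Finset.univ : Finset (Fin 3)) = {i0, i1, i2} := by
    ext x
    simp only [Finset.mem_univ, true_iff, Finset.mem_insert, Finset.mem_singleton]
    exact hcover x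
  have hsum : ∀ j : Fin 2, (∑ i, b i * M i j) = b i0 * M i0 j + (b i1 * M i1 j + b i2 * M i2 j) := by
    intro j
    rw [huniv, Finset.sum_insert (by simp [hne01, hne02]), Finset.sum_pair hne12]
  set q : ℕ := T.toNat with hq
  have hqT : (q : ℤ) = T := Int.toNat_of_nonneg hT.le
  have hqpos : 0 < q := by omega
  have hcast : ((3*q : ℕ) : ℤ) = 3*T := by push_cast [hqT]; ring
  refine le_trans ((colorable_of_wit M q hqpos b ?_ ?_).chromaticNumber_le) (by norm_num)
  · intro j
    fin_cases j
    · show ((3*q : ℕ) : ℤ) ∣ ∑ i, b i * M i 0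
      rw [hcast, hsum 0, hb0, hb1, hb2, hw0]
      obtain ⟨k, hk⟩ := hdv0
      exact ⟨k + c*w0, by linear_combination 3*hk⟩
    · show ((3*q : ℕ) : ℤ) ∣ ∑ i, b i * M i 1
      rw [hcast, hsum 1, hb0, hb1, hb2, hw1]
      obtain ⟨k, hk⟩ := hdv1
      exact ⟨k + c*w1, by linear_combination 3*hk⟩
  · intro i
    have hmi : Mid (3*T) (b i) := by
      rcases hcover i with h | h | h <;> subst h
      · rw [hb0]; exact hmid0
      · rw [hb1]; exact mid_scale T a1 hT hm1
      · rw [hb2]; exact mid_scale T a2 hT hm2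
    obtain ⟨hA, hB⟩ := hmi
    rw [hqT]
    constructor <;> linarith

theorem stmt_13 (M : Matrix (Fin 3) (Fin 2) ℤ)
    (hrows : ∀ i : Fin 3, ¬ (M i 0 = 0 ∧ M i 1 = 0))
    (hloops : ∀ i : Fin 3, (Pi.single i (1 : ℤ) : Fin 3 → ℤ) ∉ colSpan 3 2 M)
    (hdiv : ∃ i : Fin 3, (3 : ℤ) ∣ M i 0 ∧ (3 : ℤ) ∣ M i 1) :
    (SACG 3 2 M).chromaticNumber ≤ 3 := by
  obtain ⟨i0, ⟨w0, hw0⟩, ⟨w1, hw1⟩⟩ := hdiv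
  fin_cases i0
  · exact assemble M 0 1 2 (by decide) (by decide) (by decide) (by decide)
      w0 w1 hw0 hw1 hrows hloops
  · exact assemble M 1 0 2 (by decide) (by decide) (by decide) (by decide)
      w0 w1 hw0 hw1 hrows hloops
  · exact assemble M 2 0 1 (by decide) (by decide) (by decide) (by decide)
      w0 w1 hw0 hw1 hrows hloops
end

section
/- Let M be a 4×2 integer matrix with no zero rows such that no standard basis vector of ℤ^4 lies in the subgroup generated by the columns of M (so Y = M^SACG has no loops). If some row of M has both entries divisible by 3, then χ(Y) ≤ 3. -/
lemma third_ne {r s t : ℝ} (h13 : 1/3 ≤ t) (h23 : t ≤ 2/3) (w : ℤ) (h : r - s = t + w) :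
    ⌊3 * Int.fract r⌋ ≠ ⌊3 * Int.fract s⌋ := by
  intro hE
  have e1 : Int.fract r - Int.fract s = t + ((w + ⌊s⌋ - ⌊r⌋ : ℤ) : ℝ) := by
    rw [Int.fract, Int.fract]; push_cast; linarith [h]
  have A := Int.floor_le (3 * Int.fract r)
  have B := Int.lt_floor_add_one (3 * Int.fract r)
  have A' := Int.floor_le (3 * Int.fract s)
  have B' := Int.lt_floor_add_one (3 * Int.fract s)
  rw [hE] at A B
  have i1 : (w + ⌊s⌋ - ⌊r⌋ : ℤ) < 0 := by exact_mod_cast show ((w + ⌊s⌋ - ⌊r⌋ : ℤ) : ℝ) < 0 by linarith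
  have i2 : (-1 : ℤ) < (w + ⌊s⌋ - ⌊r⌋ : ℤ) := by exact_mod_cast show (-1:ℝ) < ((w + ⌊s⌋ - ⌊r⌋ : ℤ) : ℝ) by linarith
  omega

lemma colorable_of_phi (M : Matrix (Fin 4) (Fin 2) ℤ) (φ : Fin 4 → ℝ)
    (h13 : ∀ j, 1/3 ≤ φ j) (h23 : ∀ j, φ j ≤ 2/3)
    (hint : ∀ k : Fin 2, ∃ z : ℤ, ∑ j, φ j * (M j k : ℝ) = z) :
    (SACG 4 2 M).Colorable 3 := by
  classical
  set L : (Fin 4 → ℤ) → ℝ := fun x => ∑ j, φ j * (x j : ℝ) with hL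
  have Lsub : ∀ x y : Fin 4 → ℤ, L (x - y) = L x - L y := by
    intro x y
    simp only [hL, ← Finset.sum_sub_distrib]
    refine Finset.sum_congr rfl fun j _ => ?_
    have : ((x - y) j : ℝ) = (x j : ℝ) - (y j : ℝ) := by push_cast [Pi.sub_apply]; ring
    rw [this]; ring
  have Ladd : ∀ x y : Fin 4 → ℤ, L (x + y) = L x + L y := by
    intro x y
    simp only [hL, ← Finset.sum_add_distrib]
    refine Finset.sum_congr rfl fun j _ => ?_
    have : ((x + y) j : ℝ) = (x j : ℝ) + (y j : ℝ) := by push_cast [Pi.add_apply]; ring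
    rw [this]; ring
  have Lneg : ∀ x : Fin 4 → ℤ, L (-x) = - L x := by
    intro x
    simp only [hL, ← Finset.sum_neg_distrib]
    refine Finset.sum_congr rfl fun j _ => ?_
    have : ((-x) j : ℝ) = -(x j : ℝ) := by push_cast [Pi.neg_apply]; ring
    rw [this]; ring
  have LH : ∀ x ∈ colSpan 4 2 M, ∃ z : ℤ, L x = z := by
    intro x hx
    induction hx using AddSubgroup.closure_induction with
    | mem x hx =>
      obtain ⟨k, rfl⟩ := hx
      exact hint k
    | zero => exact ⟨0, by simp [hL]⟩
    | add x y _ _ ihx ihy =>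
      obtain ⟨z1, hz1⟩ := ihx; obtain ⟨z2, hz2⟩ := ihy
      exact ⟨z1 + z2, by rw [Ladd, hz1, hz2]; push_cast; ring⟩
    | neg x _ ihx =>
      obtain ⟨z, hz⟩ := ihx
      exact ⟨-z, by rw [Lneg, hz]; push_cast; ring⟩
  set cf : (Fin 4 → ℤ) → ℤ := fun x => ⌊3 * Int.fract (L x)⌋ with hcf
  have c_nonneg : ∀ x, 0 ≤ cf x := fun x =>
    Int.floor_nonneg.mpr (mul_nonneg (by norm_num) (Int.fract_nonneg _))
  have c_lt : ∀ x, cf x < 3 := by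
    intro x
    have := Int.fract_lt_one (L x)
    rw [hcf]
    have h3 : (3 : ℝ) * Int.fract (L x) < ((3:ℤ) : ℝ) := by push_cast; linarith
    exact Int.floor_lt.mpr h3
  have Lsingle : ∀ jj : Fin 4, L (Pi.single jj (1:ℤ)) = φ jj := by
    intro jj
    show (∑ j : Fin 4, φ j * (((Pi.single jj (1:ℤ) : Fin 4 → ℤ)) j : ℝ)) = φ jj
    rw [Finset.sum_eq_single jj]
    · simp
    · intro j _ hj
      rw [Pi.single_eq_of_ne hj]
      simp
    · simp
  have key : ∀ (x y : Fin 4 → ℤ) (jj : Fin 4),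
      (QuotientAddGroup.mk x : _ ⧸ colSpan 4 2 M) - QuotientAddGroup.mk y
        = QuotientAddGroup.mk (Pi.single jj 1) → cf x ≠ cf y := by
    intro x y jj h
    rw [← QuotientAddGroup.mk_sub] at h
    have hmem : (x - y) - Pi.single jj 1 ∈ colSpan 4 2 M :=
      (QuotientAddGroup.eq_iff_sub_mem).mp h
    obtain ⟨w, hw⟩ := LH _ hmem
    rw [Lsub, Lsub, Lsingle] at hw
    exact third_ne (h13 jj) (h23 jj) w (by linarith)
  -- build coloring
  refine ⟨SimpleGraph.Coloring.mk
    (fun v => ⟨(cf (Quotient.out v)).toNat, by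
      have := c_nonneg (Quotient.out v); have := c_lt (Quotient.out v); omega⟩) ?_⟩
  intro v w hadj
  obtain ⟨hne, jj, hcase⟩ := hadj
  intro hEq
  have hEq' : cf (Quotient.out v) = cf (Quotient.out w) := by
    have h1 := c_nonneg (Quotient.out v); have h2 := c_nonneg (Quotient.out w)
    have := Fin.mk.injEq _ _ _ _ ▸ hEq
    simp only [Fin.mk.injEq] at hEq
    omega
  have hv : (QuotientAddGroup.mk (Quotient.out v) : _ ⧸ colSpan 4 2 M) = v :=
    QuotientAddGroup.out_eq' v
  have hw : (QuotientAddGroup.mk (Quotient.out w) : _ ⧸ colSpan 4 2 M) = w :=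
    QuotientAddGroup.out_eq' w
  rcases hcase with h | h
  · exact key _ _ jj (by rw [hv, hw]; exact h) hEq'
  · exact key _ _ jj (by rw [hv, hw]; exact h) hEq'.symm

lemma sacg_exists_phi (M : Matrix (Fin 4) (Fin 2) ℤ)
    (hrows : ∀ i : Fin 4, ¬ (M i 0 = 0 ∧ M i 1 = 0))
    (hloops : ∀ i : Fin 4, (Pi.single i (1 : ℤ) : Fin 4 → ℤ) ∉ colSpan 4 2 M)
    (hdiv : ∃ i : Fin 4, (3 : ℤ) ∣ M i 0 ∧ (3 : ℤ) ∣ M i 1) :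
    ∃ φ : Fin 4 → ℝ, (∀ j, 1/3 ≤ φ j) ∧ (∀ j, φ j ≤ 2/3) ∧
      (∀ k : Fin 2, ∃ z : ℤ, ∑ j, φ j * (M j k : ℝ) = z) := by
  classical
  obtain ⟨i, ⟨a, ha⟩, ⟨b, hb⟩⟩ := hdiv
  have hab : ¬(a = 0 ∧ b = 0) := by
    rintro ⟨rfl, rfl⟩
    exact hrows i ⟨by simpa using ha, by simpa using hb⟩
  set g : ℕ := Int.gcd a b with hgdef
  have hgne : g ≠ 0 := by
    rw [hgdef, Ne, Int.gcd_eq_zero_iff]; tauto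
  have hgz : (g:ℤ) ≠ 0 := by exact_mod_cast hgne
  have hg1 : (1:ℝ) ≤ (g:ℝ) := by exact_mod_cast Nat.one_le_iff_ne_zero.mpr hgne
  set a' : ℤ := a / (g:ℤ) with ha'def
  set b' : ℤ := b / (g:ℤ) with hb'def
  have haa : a = (g:ℤ) * a' := (Int.mul_ediv_cancel' (Int.gcd_dvd_left a b)).symm
  have hbb : b = (g:ℤ) * b' := (Int.mul_ediv_cancel' (Int.gcd_dvd_right a b)).symm
  set α : ℤ := Int.gcdA a b with hαdef
  set β : ℤ := Int.gcdB a b with hβdef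
  have hbez : a' * α + b' * β = 1 := by
    have h := Int.gcd_eq_gcd_ab a b
    apply mul_left_cancel₀ hgz
    rw [mul_one]
    linear_combination (-1 : ℤ) * h - α * haa - β * hbb
  set D : Fin 4 → ℤ := fun j => a' * M j 1 - b' * M j 0 with hDdef
  set μ : Fin 4 → ℤ := fun j => α * M j 0 + β * M j 1 with hμdef
  have hDi : D i = 0 := by
    simp only [hDdef]
    rw [ha, hb, haa, hbb]; ring
  have hμi : μ i = 3 * (g:ℤ) := by
    have h := Int.gcd_eq_gcd_ab a b
    simp only [hμdef]
    rw [ha, hb]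
    linear_combination (-3 : ℤ) * h
  have hM0 : ∀ j, M j 0 = a' * μ j - β * D j := by
    intro j
    simp only [hμdef, hDdef]
    linear_combination (-(M j 0)) * hbez
  have hM1 : ∀ j, M j 1 = b' * μ j + α * D j := by
    intro j
    simp only [hμdef, hDdef]
    linear_combination (-(M j 1)) * hbez
  set T : ℕ := ∑ j, (D j).natAbs with hTdef
  have hT1 : T ≠ 1 := by
    intro hT
    have hex : ∃ j, D j ≠ 0 := by
      by_contra hc
      push_neg at hc
      have : T = 0 := by
        rw [hTdef]
        apply Finset.sum_eq_zero
        intro j _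
        rw [hc j]; rfl
      omega
    obtain ⟨j0, hj0⟩ := hex
    have hsplit : (D j0).natAbs + ∑ j ∈ Finset.univ.erase j0, (D j).natAbs = T := by
      rw [hTdef]
      exact Finset.add_sum_erase Finset.univ (fun j => (D j).natAbs) (Finset.mem_univ j0)
    have hpos : 1 ≤ (D j0).natAbs := by
      rcases Nat.eq_zero_or_pos (D j0).natAbs with h | h
      · exact absurd (Int.natAbs_eq_zero.mp h) hj0
      · omega
    have hrest : ∑ j ∈ Finset.univ.erase j0, (D j).natAbs = 0 := by omega
    have habs1 : (D j0).natAbs = 1 := by omega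
    have hzero : ∀ j, j ≠ j0 → D j = 0 := by
      intro j hj
      have hmem : j ∈ Finset.univ.erase j0 := Finset.mem_erase.mpr ⟨hj, Finset.mem_univ j⟩
      exact Int.natAbs_eq_zero.mp (Finset.sum_eq_zero_iff.mp hrest j hmem)
    have hcol0 : (fun jj => M jj 0) ∈ colSpan 4 2 M :=
      AddSubgroup.subset_closure ⟨0, rfl⟩
    have hcol1 : (fun jj => M jj 1) ∈ colSpan 4 2 M :=
      AddSubgroup.subset_closure ⟨1, rfl⟩
    have hDmem : D ∈ colSpan 4 2 M := by
      have h1 : D = a' • (fun jj => M jj 1) + (-b') • (fun jj => M jj 0) := by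
        funext k
        simp only [hDdef, Pi.add_apply, Pi.smul_apply, smul_eq_mul]
        ring
      rw [h1]
      exact AddSubgroup.add_mem _ (AddSubgroup.zsmul_mem _ hcol1 _)
        (AddSubgroup.zsmul_mem _ hcol0 _)
    rcases Int.natAbs_eq_iff.mp habs1 with h1 | h1
    · apply hloops j0
      have heq : Pi.single j0 (1:ℤ) = D := by
        funext k
        by_cases hk : k = j0
        · subst hk; rw [Pi.single_eq_same, h1]; rfl
        · rw [Pi.single_eq_of_ne hk, hzero k hk]
      rw [heq]; exact hDmem
    · apply hloops j0
      have heq : Pi.single j0 (1:ℤ) = -D := by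
        funext k
        by_cases hk : k = j0
        · subst hk; rw [Pi.single_eq_same, Pi.neg_apply, h1]; norm_num
        · rw [Pi.single_eq_of_ne hk, Pi.neg_apply, hzero k hk]; rfl
      rw [heq]; exact AddSubgroup.neg_mem _ hDmem
  obtain ⟨u, hu13, hu23, mz, hmz⟩ :
      ∃ u : ℝ, 1/3 ≤ u ∧ u ≤ 2/3 ∧ ∃ mz : ℤ, (T:ℝ) * u = mz := by
    rcases Nat.eq_zero_or_pos T with hT0 | hTpos
    · exact ⟨1/2, by norm_num, by norm_num, 0, by rw [hT0]; norm_num⟩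
    · have hT2 : 2 ≤ T := by omega
      have hdm := Nat.div_add_mod (T + 2) 3
      have hmod := Nat.mod_lt (T + 2) (show 0 < 3 by norm_num)
      set mN : ℕ := (T + 2) / 3 with hmN
      have h3m1 : T ≤ 3 * mN := by omega
      have h3m2 : 3 * mN ≤ 2 * T := by omega
      have hTR : (0:ℝ) < (T:ℝ) := by exact_mod_cast hTpos
      refine ⟨(mN : ℝ)/(T:ℝ), ?_, ?_, (mN:ℤ), ?_⟩
      · rw [le_div_iff₀ hTR]
        have : (T:ℝ) ≤ 3 * (mN:ℝ) := by exact_mod_cast h3m1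
        linarith
      · rw [div_le_iff₀ hTR]
        have : 3 * (mN:ℝ) ≤ 2 * (T:ℝ) := by exact_mod_cast h3m2
        linarith
      · push_cast
        field_simp
  set φ0 : Fin 4 → ℝ := fun j => if 0 ≤ D j then u else 1 - u with hφ0
  set C : ℝ := ∑ j ∈ Finset.univ.erase i, (μ j : ℝ) * φ0 j with hC
  set m' : ℤ := ⌈C⌉ + (g:ℤ) with hm'
  set φ : Fin 4 → ℝ := Function.update φ0 i (((m':ℝ) - C)/(3*(g:ℝ))) with hφ
  have hφi : φ i = ((m':ℝ) - C)/(3*(g:ℝ)) := by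
    rw [hφ]; exact Function.update_self _ _ _
  have hφj : ∀ j, j ≠ i → φ j = φ0 j := by
    intro j hj
    rw [hφ]; exact Function.update_of_ne hj _ _
  have hceil1 : C ≤ (⌈C⌉:ℝ) := Int.le_ceil C
  have hceil2 : (⌈C⌉:ℝ) < C + 1 := Int.ceil_lt_add_one C
  have h3g : (0:ℝ) < 3*(g:ℝ) := by linarith
  have hφi13 : 1/3 ≤ φ i := by
    rw [hφi, le_div_iff₀ h3g, hm']
    push_cast
    linarith
  have hφi23 : φ i ≤ 2/3 := by
    rw [hφi, div_le_iff₀ h3g, hm']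
    push_cast
    linarith
  have hφ013 : ∀ j, 1/3 ≤ φ0 j := by
    intro j
    rw [hφ0]
    dsimp only
    split <;> linarith
  have hφ023 : ∀ j, φ0 j ≤ 2/3 := by
    intro j
    rw [hφ0]
    dsimp only
    split <;> linarith
  have h13 : ∀ j, 1/3 ≤ φ j := by
    intro j
    by_cases hj : j = i
    · subst hj; exact hφi13
    · rw [hφj j hj]; exact hφ013 j
  have h23 : ∀ j, φ j ≤ 2/3 := by
    intro j
    by_cases hj : j = i
    · subst hj; exact hφi23
    · rw [hφj j hj]; exact hφ023 j
  -- sum identities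
  set zneg : ℤ := ∑ j, (if D j < 0 then D j else 0) with hzneg
  have hφD : ∑ j, φ j * (D j : ℝ) = ((mz + zneg : ℤ) : ℝ) := by
    have hterm : ∀ j, φ j * (D j : ℝ)
        = u * ((D j).natAbs : ℝ) + ((if D j < 0 then D j else 0 : ℤ) : ℝ) := by
      intro j
      by_cases hj : j = i
      · subst hj
        rw [hDi]
        norm_num
      · rw [hφj j hj, hφ0]
        dsimp only
        by_cases hD : 0 ≤ D j
        · rw [if_pos hD, if_neg (not_lt.mpr hD)]
          have hcast : ((D j).natAbs : ℝ) = (D j : ℝ) := by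
            rw [Nat.cast_natAbs]
            exact_mod_cast abs_of_nonneg hD
          rw [hcast]
          push_cast
          ring
        · push_neg at hD
          rw [if_neg (not_le.mpr hD), if_pos hD]
          have hcast : ((D j).natAbs : ℝ) = -(D j : ℝ) := by
            rw [Nat.cast_natAbs]
            exact_mod_cast abs_of_neg hD
          rw [hcast]
          push_cast
          ring
    rw [Finset.sum_congr rfl fun j _ => hterm j]
    rw [Finset.sum_add_distrib, ← Finset.mul_sum]
    have hsum1 : ∑ j, ((D j).natAbs : ℝ) = (T:ℝ) := by
      rw [hTdef]; push_cast; rfl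
    have hsum2 : ∑ j, ((if D j < 0 then D j else 0 : ℤ) : ℝ) = (zneg : ℝ) := by
      rw [hzneg]; push_cast; rfl
    rw [hsum1, hsum2]
    push_cast
    linarith [hmz]
  have hφμ : ∑ j, φ j * (μ j : ℝ) = (m' : ℝ) := by
    have hsplit : (∑ j : Fin 4, φ j * (μ j:ℝ))
        = φ i * (μ i:ℝ) + ∑ j ∈ Finset.univ.erase i, φ j * (μ j:ℝ) :=
      (Finset.add_sum_erase Finset.univ (fun j => φ j * (μ j:ℝ)) (Finset.mem_univ i)).symm
    have herase : ∑ j ∈ Finset.univ.erase i, φ j * (μ j:ℝ) = C := by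
      rw [hC]
      refine Finset.sum_congr rfl fun j hj => ?_
      rw [hφj j (Finset.mem_erase.mp hj).1]
      ring
    have hii : φ i * (μ i : ℝ) = (m':ℝ) - C := by
      rw [hφi, hμi]
      push_cast
      field_simp
    rw [hsplit, herase, hii]
    ring
  refine ⟨φ, h13, h23, ?_⟩
  intro k
  fin_cases k
  · refine ⟨a' * m' - β * (mz + zneg), ?_⟩
    show ∑ j : Fin 4, φ j * (M j 0 : ℝ) = ((a' * m' - β * (mz + zneg) : ℤ) : ℝ)
    have hterm : ∀ j, φ j * (M j 0 : ℝ)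
        = (a':ℝ) * (φ j * (μ j:ℝ)) - (β:ℝ) * (φ j * (D j:ℝ)) := by
      intro j
      rw [hM0 j]
      push_cast
      ring
    rw [Finset.sum_congr rfl fun j _ => hterm j]
    rw [Finset.sum_sub_distrib, ← Finset.mul_sum, ← Finset.mul_sum, hφμ, hφD]
    push_cast
    ring
  · refine ⟨b' * m' + α * (mz + zneg), ?_⟩
    show ∑ j : Fin 4, φ j * (M j 1 : ℝ) = ((b' * m' + α * (mz + zneg) : ℤ) : ℝ)
    have hterm : ∀ j, φ j * (M j 1 : ℝ)
        = (b':ℝ) * (φ j * (μ j:ℝ)) + (α:ℝ) * (φ j * (D j:ℝ)) := by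
      intro j
      rw [hM1 j]
      push_cast
      ring
    rw [Finset.sum_congr rfl fun j _ => hterm j]
    rw [Finset.sum_add_distrib, ← Finset.mul_sum, ← Finset.mul_sum, hφμ, hφD]
    push_cast
    ring

theorem stmt_14 (M : Matrix (Fin 4) (Fin 2) ℤ)
    (hrows : ∀ i : Fin 4, ¬ (M i 0 = 0 ∧ M i 1 = 0))
    (hloops : ∀ i : Fin 4, (Pi.single i (1 : ℤ) : Fin 4 → ℤ) ∉ colSpan 4 2 M)
    (hdiv : ∃ i : Fin 4, (3 : ℤ) ∣ M i 0 ∧ (3 : ℤ) ∣ M i 1) :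
    (SACG 4 2 M).chromaticNumber ≤ 3 := by
  obtain ⟨φ, h13, h23, hint⟩ := sacg_exists_phi M hrows hloops hdiv
  have hcol := colorable_of_phi M φ h13 h23 hint
  exact_mod_cast hcol.chromaticNumber_le
end

section
/- Let M be a 5×2 integer matrix. Then either some row of M has both entries divisible by 3, or there exist distinct row indices i ≠ j and ε ∈ {1, −1} such that both entries of the vector (row i of M) + ε·(row j of M) are divisible by 3. -/
abbrev P3 := (ZMod 3) × (ZMod 3)

def canon3 (v : P3) : P3 :=
  if v.1 = 2 ∨ (v.1 = 0 ∧ v.2 = 2) then -v else v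

lemma canon3_eq (v : P3) : canon3 v = v ∨ canon3 v = -v := by
  revert v; decide

lemma canon3_mem (v : P3) (h : v ≠ 0) :
    canon3 v ∈ ({(1,0),(1,1),(1,2),(0,1)} : Finset P3) := by
  revert v; decide

lemma aux16 (f : Fin 5 → P3) :
    (∃ i, f i = 0) ∨ ∃ i j, i ≠ j ∧ (f i + f j = 0 ∨ f i - f j = 0) := by
  by_cases h0 : ∃ i, f i = 0
  · exact Or.inl h0
  · push_neg at h0
    right
    have hmaps : ∀ i ∈ (Finset.univ : Finset (Fin 5)),
        canon3 (f i) ∈ ({(1,0),(1,1),(1,2),(0,1)} : Finset P3) := by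
      intro i _; exact canon3_mem _ (h0 i)
    have hcard : ({(1,0),(1,1),(1,2),(0,1)} : Finset P3).card < (Finset.univ : Finset (Fin 5)).card := by
      decide
    obtain ⟨i, _, j, _, hij, heq⟩ :=
      Finset.exists_ne_map_eq_of_card_lt_of_maps_to hcard hmaps
    refine ⟨i, j, hij, ?_⟩
    rcases canon3_eq (f i) with hi | hi <;> rcases canon3_eq (f j) with hj | hj <;>
      rw [hi, hj] at heq
    · right; rw [heq]; ring
    · left; rw [heq]; ring
    · left; rw [← neg_eq_iff_eq_neg.mpr heq.symm]; ring
    · right; have : f i = f j := by rw [← neg_neg (f i), heq, neg_neg]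
      rw [this]; ring
    
theorem stmt_16 (M : Matrix (Fin 5) (Fin 2) ℤ) :
    (∃ i : Fin 5, (3 : ℤ) ∣ M i 0 ∧ (3 : ℤ) ∣ M i 1) ∨
    (∃ i j : Fin 5, i ≠ j ∧ ∃ ε : ℤ, (ε = 1 ∨ ε = -1) ∧
      (3 : ℤ) ∣ M i 0 + ε * M j 0 ∧ (3 : ℤ) ∣ M i 1 + ε * M j 1) := by
  have key := aux16 (fun i => (((M i 0 : ZMod 3)), ((M i 1 : ZMod 3))))
  have hdvd : ∀ n : ℤ, (3 : ℤ) ∣ n ↔ (n : ZMod 3) = 0 := by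
    intro n
    rw [ZMod.intCast_zmod_eq_zero_iff_dvd]; norm_num
  rcases key with ⟨i, hi⟩ | ⟨i, j, hij, h⟩
  · left
    refine ⟨i, ?_, ?_⟩ <;> rw [hdvd]
    · exact congrArg Prod.fst hi
    · exact congrArg Prod.snd hi
  · right
    rcases h with h | h
    · refine ⟨i, j, hij, 1, Or.inl rfl, ?_, ?_⟩ <;> rw [hdvd] <;> push_cast <;> simp only [one_mul]
      · have := congrArg Prod.fst h; simpa using this
      · have := congrArg Prod.snd h; simpa using this
    · refine ⟨i, j, hij, -1, Or.inr rfl, ?_, ?_⟩ <;> rw [hdvd] <;> push_cast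
      · have := congrArg Prod.fst h; simp at this; linear_combination this
      · have := congrArg Prod.snd h; simp at this; linear_combination this
end
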